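/- arXiv:1403.0460 — 6 statements merged into one kernel-verified Lean document; each statement's English description precedes it below -/
import Mathlib

section
/- Fix integers n ≥ 1, c ≥ 1 and m ∈ {0, …, c}. Let P^n(c)_m = {(A₁, A₂; C₁, …, C_n; e) ∈ P^n(c) : A_{2m} is invertible}. Then the map ζ_m : P^n(c)_m → T(c) × GL(c, ℂ) sending (A₁, A₂; C₁, …, C_n; e) to ((B_m, E_m, e), A_{2m}) is well defined (i.e. for every tuple in P^n(c)_m the triple (B_m, E_m, e) satisfies (T1) and (T2)) and is a bijection onto T(c) × GL(c, ℂ). -/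
open Matrix

abbrev Mat (c : ℕ) := Matrix (Fin c) (Fin c) ℂ

noncomputable def cS (c : ℕ) (m : ℤ) : ℂ :=
  ((Real.cos (Real.pi * (m : ℝ) / ((c : ℝ) + 1)) : ℝ) : ℂ)

noncomputable def sS (c : ℕ) (m : ℤ) : ℂ :=
  ((Real.sin (Real.pi * (m : ℝ) / ((c : ℝ) + 1)) : ℝ) : ℂ)

noncomputable def A1M (c : ℕ) (m : ℤ) (A1 A2 : Mat c) : Mat c :=
  cS c m • A1 - sS c m • A2

noncomputable def A2M (c : ℕ) (m : ℤ) (A1 A2 : Mat c) : Mat c :=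
  sS c m • A1 + cS c m • A2

noncomputable def BM (c : ℕ) (m : ℤ) (A1 A2 : Mat c) : Mat c :=
  (A2M c m A1 A2)⁻¹ * A1M c m A1 A2

noncomputable def DM (n c : ℕ) (m : ℤ) (C : Fin n → Mat c) : Mat c :=
  ∑ q : Fin n, (((n - 1).choose q.val : ℂ) * cS c m ^ (n - 1 - q.val) * sS c m ^ q.val) • C q

noncomputable def EM (n c : ℕ) (m : ℤ) (A1 A2 : Mat c) (C : Fin n → Mat c) : Mat c :=
  DM n c m C * A2M c m A1 A2

/-- Condition (P1). -/
def CondP1 (n c : ℕ) (A1 A2 : Mat c) (C : Fin n → Mat c) : Prop :=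
  (∀ h : n = 1, A1 * C ⟨0, by omega⟩ * A2 = A2 * C ⟨0, by omega⟩ * A1) ∧
  ∀ q : ℕ, ∀ hq : q + 1 < n,
    A1 * C ⟨q, by omega⟩ = A2 * C ⟨q + 1, hq⟩ ∧
    C ⟨q, by omega⟩ * A1 = C ⟨q + 1, hq⟩ * A2

/-- Condition (P2). -/
def CondP2 (c : ℕ) (A1 A2 : Mat c) : Prop :=
  ∃ ν : ℂ × ℂ, ν ≠ 0 ∧ (ν.1 • A1 + ν.2 • A2).det ≠ 0

/-- Condition (P3), with `C1`, `Cn` the first and last of the `C` matrices. -/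
def CondP3 (n c : ℕ) (A1 A2 C1 Cn : Mat c) (e : Fin c → ℂ) : Prop :=
  ∀ l1 l2 m1 m2 : ℂ, (l1, l2) ≠ 0 → l1 ^ n * m1 + l2 ^ n * m2 = 0 →
    ∀ v : Fin c → ℂ,
      (l2 • A1 + l1 • A2).mulVec v = 0 →
      (C1 * A2 + m1 • 1).mulVec v = 0 →
      (Cn * A1 + ((-1 : ℂ) ^ (n - 1) * m2) • 1).mulVec v = 0 →
      e ⬝ᵥ v = 0 → v = 0

/-- Membership in `P^n(c)`: conditions (P1), (P2), (P3). -/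
def CondP (n c : ℕ) (hn : 0 < n) (A1 A2 : Mat c) (C : Fin n → Mat c) (e : Fin c → ℂ) : Prop :=
  CondP1 n c A1 A2 C ∧ CondP2 c A1 A2 ∧
    CondP3 n c A1 A2 (C ⟨0, hn⟩) (C ⟨n - 1, by omega⟩) e

/-- Condition (T2). -/
def CondT2 (c : ℕ) (b1 b2 : Mat c) (e : Fin c → ℂ) : Prop :=
  ∀ z w : ℂ, ∀ v : Fin c → ℂ,
    (b1 + z • 1).mulVec v = 0 → (b2 + w • 1).mulVec v = 0 → e ⬝ᵥ v = 0 → v = 0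

/-- ADHM data: conditions (T1) and (T2). -/
def ADHM (c : ℕ) (b1 b2 : Mat c) (e : Fin c → ℂ) : Prop :=
  b1 * b2 = b2 * b1 ∧ CondT2 c b1 b2 e

lemma trig (c : ℕ) (m : ℤ) : cS c m ^ 2 + sS c m ^ 2 = 1 := by
  unfold cS sS
  rw [← Complex.ofReal_pow, ← Complex.ofReal_pow, ← Complex.ofReal_add]
  norm_num [Real.cos_sq_add_sin_sq]

lemma sum_mulVec {c : ℕ} {ι : Type*} (s : Finset ι) (f : ι → Mat c) (v : Fin c → ℂ) :
    (∑ i ∈ s, f i).mulVec v = ∑ i ∈ s, (f i).mulVec v := by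
  classical
  induction s using Finset.induction_on with
  | empty => simp [Matrix.zero_mulVec]
  | insert _ _ h ih => simp [Finset.sum_insert h, Matrix.add_mulVec, ih]



lemma fwd_swap {n c : ℕ} {A1 A2 : Mat c} {C : Fin n → Mat c}
    (h1 : CondP1 n c A1 A2 C) (q : Fin n) :
    A1 * C q * A2 = A2 * C q * A1 := by
  rcases q with ⟨q0, hq0⟩
  by_cases h : q0 + 1 < n
  · obtain ⟨hL, hR⟩ := h1.2 q0 h
    calc A1 * C ⟨q0, hq0⟩ * A2 = A2 * C ⟨q0+1, h⟩ * A2 := by rw [hL]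
      _ = A2 * (C ⟨q0, hq0⟩ * A1) := by rw [mul_assoc, ← hR]
      _ = A2 * C ⟨q0, hq0⟩ * A1 := by rw [mul_assoc]
  · by_cases h1n : n = 1
    · have hq : (⟨q0, hq0⟩ : Fin n) = ⟨0, by omega⟩ := by
        apply Fin.ext; simp; omega
      rw [hq]; exact h1.1 h1n
    · obtain ⟨hL, hR⟩ := h1.2 (q0 - 1) (by omega)
      have e1 : (⟨q0 - 1 + 1, by omega⟩ : Fin n) = ⟨q0, hq0⟩ := by
        apply Fin.ext; simp; omega
      rw [e1] at hL hR
      calc A1 * C ⟨q0, hq0⟩ * A2 = A1 * (C ⟨q0, hq0⟩ * A2) := by rw [mul_assoc]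
        _ = A1 * (C ⟨q0-1, by omega⟩ * A1) := by rw [← hR]
        _ = (A1 * C ⟨q0-1, by omega⟩) * A1 := by rw [mul_assoc]
        _ = A2 * C ⟨q0, hq0⟩ * A1 := by rw [hL]

lemma rot_swap {c : ℕ} (m : ℤ) {A1 A2 X : Mat c} (h : A1 * X * A2 = A2 * X * A1) :
    A1M c m A1 A2 * X * A2M c m A1 A2 = A2M c m A1 A2 * X * A1M c m A1 A2 := by
  unfold A1M A2M
  simp only [sub_mul, mul_sub, add_mul, mul_add, smul_mul_assoc, mul_smul_comm, smul_smul, h]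
  module

lemma fwd_T1 {n c : ℕ} (m : ℤ) {A1 A2 : Mat c} {C : Fin n → Mat c}
    (h1 : CondP1 n c A1 A2 C) (hg : IsUnit (A2M c m A1 A2).det) :
    BM c m A1 A2 * EM n c m A1 A2 C = EM n c m A1 A2 C * BM c m A1 A2 := by
  have key : A1M c m A1 A2 * DM n c m C * A2M c m A1 A2
      = A2M c m A1 A2 * DM n c m C * A1M c m A1 A2 := by
    unfold DM
    rw [Finset.mul_sum, Finset.mul_sum, Finset.sum_mul, Finset.sum_mul]
    refine Finset.sum_congr rfl fun q _ => ?_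
    rw [mul_smul_comm, mul_smul_comm, smul_mul_assoc, smul_mul_assoc]
    exact congrArg _ (rot_swap m (fwd_swap h1 q))
  unfold BM EM
  calc (A2M c m A1 A2)⁻¹ * A1M c m A1 A2 * (DM n c m C * A2M c m A1 A2)
      = (A2M c m A1 A2)⁻¹ * (A1M c m A1 A2 * DM n c m C * A2M c m A1 A2) := by
        simp only [mul_assoc]
    _ = (A2M c m A1 A2)⁻¹ * (A2M c m A1 A2 * (DM n c m C * A1M c m A1 A2)) := by
        rw [key]; simp only [mul_assoc]
    _ = DM n c m C * A1M c m A1 A2 := Matrix.nonsing_inv_mul_cancel_left _ _ hg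
    _ = DM n c m C * A2M c m A1 A2 * ((A2M c m A1 A2)⁻¹ * A1M c m A1 A2) := by
        rw [← mul_assoc, Matrix.mul_nonsing_inv_cancel_right _ _ hg]

lemma fwd_T2 {n c : ℕ} (m : ℤ) (hn : 0 < n) {A1 A2 : Mat c} {C : Fin n → Mat c} {e : Fin c → ℂ}
    (h1 : CondP1 n c A1 A2 C)
    (hP3 : CondP3 n c A1 A2 (C ⟨0, hn⟩) (C ⟨n - 1, by omega⟩) e)
    (hg : IsUnit (A2M c m A1 A2).det) :
    CondT2 c (BM c m A1 A2) (EM n c m A1 A2 C) e := by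
  intro z w v hz hw he
  set co := cS c m with hco
  set si := sS c m with hsi
  set l2 := co + z * si with hl2def
  set l1 := z * co - si with hl1def
  set X1 := A1.mulVec v with hX1
  set X2 := A2.mulVec v with hX2
  have ht : co ^ 2 + si ^ 2 = 1 := by rw [hco, hsi]; exact trig c m
  have h0 : co * l2 - si * l1 = 1 := by
    rw [hl2def, hl1def]; linear_combination ht
  have hker : l2 • X1 + l1 • X2 = 0 := by
    have hmat : A2M c m A1 A2 * (BM c m A1 A2 + z • 1) =
        A1M c m A1 A2 + z • A2M c m A1 A2 := by
      unfold BM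
      rw [mul_add, mul_smul_comm, mul_one, Matrix.mul_nonsing_inv_cancel_left _ _ hg]
    have h2 : (A1M c m A1 A2 + z • A2M c m A1 A2).mulVec v = 0 := by
      rw [← hmat, ← Matrix.mulVec_mulVec, hz, Matrix.mulVec_zero]
    have hrot : A1M c m A1 A2 + z • A2M c m A1 A2 = l2 • A1 + l1 • A2 := by
      unfold A1M A2M
      rw [hl2def, hl1def, ← hco, ← hsi]
      module
    rw [hrot, Matrix.add_mulVec, Matrix.smul_mulVec, Matrix.smul_mulVec] at h2
    exact h2
  have hA1v : l2 • X1 = (-l1) • X2 := by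
    rw [neg_smul, eq_neg_iff_add_eq_zero]; exact hker
  have hA2v : l1 • X2 = (-l2) • X1 := by
    rw [neg_smul, eq_neg_iff_add_eq_zero, add_comm]; exact hker
  have hrec1 : ∀ q0 (h : q0 < n),
      l2 ^ q0 • (C ⟨q0, h⟩).mulVec X2 = (-l1) ^ q0 • (C ⟨0, hn⟩).mulVec X2 := by
    intro q0
    induction q0 with
    | zero => intro h; simp
    | succ k ih =>
        intro h
        have hR := (h1.2 k h).2
        have step : (C ⟨k+1, h⟩).mulVec X2 = (C ⟨k, by omega⟩).mulVec X1 := by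
          rw [hX1, hX2, Matrix.mulVec_mulVec, Matrix.mulVec_mulVec, hR]
        calc l2 ^ (k+1) • (C ⟨k+1, h⟩).mulVec X2
            = l2 ^ k • (l2 • (C ⟨k, by omega⟩).mulVec X1) := by
              rw [step, pow_succ, mul_smul]
          _ = l2 ^ k • ((-l1) • (C ⟨k, by omega⟩).mulVec X2) := by
              rw [← Matrix.mulVec_smul, hA1v, Matrix.mulVec_smul]
          _ = (-l1) • (l2 ^ k • (C ⟨k, by omega⟩).mulVec X2) := smul_comm _ _ _
          _ = (-l1) • ((-l1) ^ k • (C ⟨0, hn⟩).mulVec X2) := by rw [ih (by omega)]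
          _ = (-l1) ^ (k+1) • (C ⟨0, hn⟩).mulVec X2 := by
              rw [smul_smul, ← pow_succ']
  have hrec2 : ∀ d q0 (h : q0 + d = n - 1),
      l1 ^ d • (C ⟨q0, by omega⟩).mulVec X1
        = (-l2) ^ d • (C ⟨n-1, by omega⟩).mulVec X1 := by
    intro d
    induction d with
    | zero =>
        intro q0 h
        have hq0 : q0 = n - 1 := by omega
        subst hq0; simp
    | succ k ih =>
        intro q0 h
        have hq : q0 + 1 < n := by omega
        have hR := (h1.2 q0 hq).2
        have step : (C ⟨q0, by omega⟩).mulVec X1 = (C ⟨q0+1, hq⟩).mulVec X2 := by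
          rw [hX1, hX2, Matrix.mulVec_mulVec, Matrix.mulVec_mulVec, hR]
        calc l1 ^ (k+1) • (C ⟨q0, by omega⟩).mulVec X1
            = l1 ^ k • (l1 • (C ⟨q0+1, hq⟩).mulVec X2) := by
              rw [step, pow_succ, mul_smul]
          _ = l1 ^ k • ((-l2) • (C ⟨q0+1, hq⟩).mulVec X1) := by
              rw [← Matrix.mulVec_smul, hA2v, Matrix.mulVec_smul]
          _ = (-l2) • (l1 ^ k • (C ⟨q0+1, hq⟩).mulVec X1) := smul_comm _ _ _
          _ = (-l2) • ((-l2) ^ k • (C ⟨n-1, by omega⟩).mulVec X1) := by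
              rw [ih (q0+1) (by omega)]
          _ = (-l2) ^ (k+1) • (C ⟨n-1, by omega⟩).mulVec X1 := by
              rw [smul_smul, ← pow_succ']
  have hrec1' : ∀ q : Fin n, l2 ^ (q : ℕ) • (C q).mulVec X2
      = (-l1) ^ (q : ℕ) • (C ⟨0, hn⟩).mulVec X2 := fun q => hrec1 q.val q.isLt
  have hrec2' : ∀ q : Fin n, l1 ^ (n-1-(q : ℕ)) • (C q).mulVec X1
      = (-l2) ^ (n-1-(q : ℕ)) • (C ⟨n-1, by omega⟩).mulVec X1 :=
    fun q => hrec2 (n-1-q.val) q.val (by have := q.isLt; omega)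
  have hw' : (DM n c m C).mulVec ((A2M c m A1 A2).mulVec v) = -(w • v) := by
    rw [Matrix.mulVec_mulVec]
    rw [Matrix.add_mulVec, Matrix.smul_mulVec, Matrix.one_mulVec] at hw
    unfold EM at hw
    exact eq_neg_of_add_eq_zero_left hw
  have hgv2 : l2 • (A2M c m A1 A2).mulVec v = X2 := by
    unfold A2M
    rw [Matrix.add_mulVec, Matrix.smul_mulVec, Matrix.smul_mulVec, ← hX1, ← hX2,
      ← hco, ← hsi]
    calc l2 • (si • X1 + co • X2) = si • (l2 • X1) + (co * l2) • X2 := by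
          module
      _ = si • ((-l1) • X2) + (co * l2) • X2 := by rw [hA1v]
      _ = (co * l2 - si * l1) • X2 := by
          rw [smul_smul, ← add_smul]; ring_nf
      _ = X2 := by rw [h0, one_smul]
  have hgv1 : l1 • (A2M c m A1 A2).mulVec v = -X1 := by
    unfold A2M
    rw [Matrix.add_mulVec, Matrix.smul_mulVec, Matrix.smul_mulVec, ← hX1, ← hX2,
      ← hco, ← hsi]
    calc l1 • (si • X1 + co • X2) = (si * l1) • X1 + co • (l1 • X2) := by
          module
      _ = (si * l1) • X1 + co • ((-l2) • X1) := by rw [hA2v]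
      _ = (-(co * l2 - si * l1)) • X1 := by
          rw [smul_smul, ← add_smul]; ring_nf
      _ = -X1 := by rw [h0]; simp
  have hnn : n - 1 + 1 = n := by omega
  have hDX : ∀ Y : Fin c → ℂ, (DM n c m C).mulVec Y
      = ∑ q : Fin n, (((n - 1).choose q.val : ℂ) * co ^ (n - 1 - q.val) * si ^ q.val) •
          (C q).mulVec Y := by
    intro Y
    unfold DM
    rw [_root_.sum_mulVec]
    exact Finset.sum_congr rfl fun q _ => Matrix.smul_mulVec _ _ _
  -- first eigen identity
  have hI1 : (C ⟨0, hn⟩ * A2).mulVec v = -((l2 ^ n * w) • v) := by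
    have key : l2 ^ n • ((DM n c m C).mulVec ((A2M c m A1 A2).mulVec v))
        = (C ⟨0, hn⟩).mulVec X2 := by
      have e1 : l2 ^ n • ((DM n c m C).mulVec ((A2M c m A1 A2).mulVec v))
          = l2 ^ (n-1) • ((DM n c m C).mulVec X2) := by
        rw [← hgv2, Matrix.mulVec_smul, smul_smul, ← pow_succ, hnn]
      rw [e1, hDX, Finset.smul_sum]
      have e2 : ∀ q : Fin n,
          l2 ^ (n-1) • ((((n - 1).choose q.val : ℂ) * co ^ (n - 1 - q.val) * si ^ q.val) •
            (C q).mulVec X2)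
          = (((n - 1).choose q.val : ℂ) * (co * l2) ^ (n - 1 - q.val) * (si * (-l1)) ^ q.val) •
            (C ⟨0, hn⟩).mulVec X2 := by
        intro q
        have hsplit : (l2 : ℂ) ^ (n-1)
            = l2 ^ (n-1-(q:ℕ)) * l2 ^ (q:ℕ) := by
          rw [← pow_add]; congr 1; have := q.isLt; omega
        rw [smul_smul]
        have hc1 : l2 ^ (n-1) * (((n - 1).choose q.val : ℂ) * co ^ (n - 1 - q.val) * si ^ q.val)
            = (((n - 1).choose q.val : ℂ) * co ^ (n - 1 - q.val) * si ^ q.val * l2 ^ (n-1-(q:ℕ)))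
              * l2 ^ (q:ℕ) := by
          rw [hsplit]; ring
        rw [hc1, mul_smul, hrec1' q, smul_smul]
        exact congrArg (fun r : ℂ => r • (C ⟨0, hn⟩).mulVec X2)
          (by rw [mul_pow, mul_pow]; ring)
      rw [Finset.sum_congr rfl fun q _ => e2 q, ← Finset.sum_smul]
      have hsum : (∑ q : Fin n,
          (((n - 1).choose q.val : ℂ) * (co * l2) ^ (n - 1 - q.val) * (si * (-l1)) ^ q.val)) = 1 := by
        rw [Fin.sum_univ_eq_sum_range
          (fun q => (((n - 1).choose q : ℂ) * (co * l2) ^ (n - 1 - q) * (si * (-l1)) ^ q))]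
        have hap := add_pow (si * (-l1)) (co * l2) (n-1)
        rw [hnn] at hap
        have h1' : si * (-l1) + co * l2 = 1 := by linear_combination h0
        rw [h1', one_pow] at hap
        rw [hap]
        exact Finset.sum_congr rfl fun k _ => by ring
      rw [hsum, one_smul]
    rw [← Matrix.mulVec_mulVec, ← hX2, ← key, hw', smul_neg, smul_smul]
  -- second eigen identity
  have hI2 : (C ⟨n-1, by omega⟩ * A1).mulVec v = ((-1:ℂ) ^ (n-1) * (l1 ^ n * w)) • v := by
    have key2 : l1 ^ (n-1) • ((DM n c m C).mulVec X1)
        = (-1:ℂ) ^ (n-1) • (C ⟨n-1, by omega⟩).mulVec X1 := by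
      rw [hDX, Finset.smul_sum]
      have e2 : ∀ q : Fin n,
          l1 ^ (n-1) • ((((n - 1).choose q.val : ℂ) * co ^ (n - 1 - q.val) * si ^ q.val) •
            (C q).mulVec X1)
          = (((n - 1).choose q.val : ℂ) * (co * (-l2)) ^ (n - 1 - q.val) * (si * l1) ^ q.val) •
            (C ⟨n-1, by omega⟩).mulVec X1 := by
        intro q
        have hsplit : (l1 : ℂ) ^ (n-1)
            = l1 ^ (q:ℕ) * l1 ^ (n-1-(q:ℕ)) := by
          rw [← pow_add]; congr 1; have := q.isLt; omega
        rw [smul_smul]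
        have hc1 : l1 ^ (n-1) * (((n - 1).choose q.val : ℂ) * co ^ (n - 1 - q.val) * si ^ q.val)
            = (((n - 1).choose q.val : ℂ) * co ^ (n - 1 - q.val) * si ^ q.val * l1 ^ (q:ℕ))
              * l1 ^ (n-1-(q:ℕ)) := by
          rw [hsplit]; ring
        rw [hc1, mul_smul, hrec2' q, smul_smul]
        exact congrArg (fun r : ℂ => r • (C ⟨n-1, by omega⟩).mulVec X1)
          (by rw [mul_pow, mul_pow]; ring)
      rw [Finset.sum_congr rfl fun q _ => e2 q, ← Finset.sum_smul]
      have hsum : (∑ q : Fin n,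
          (((n - 1).choose q.val : ℂ) * (co * (-l2)) ^ (n - 1 - q.val) * (si * l1) ^ q.val))
          = (-1:ℂ) ^ (n-1) := by
        rw [Fin.sum_univ_eq_sum_range
          (fun q => (((n - 1).choose q : ℂ) * (co * (-l2)) ^ (n - 1 - q) * (si * l1) ^ q))]
        have hap := add_pow (si * l1) (co * (-l2)) (n-1)
        rw [hnn] at hap
        have h1' : si * l1 + co * (-l2) = -1 := by linear_combination -h0
        rw [h1'] at hap
        rw [hap]
        exact Finset.sum_congr rfl fun k _ => by ring
      rw [hsum]
    have hX1' : X1 = -(l1 • (A2M c m A1 A2).mulVec v) := by rw [hgv1, neg_neg]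
    have key3 : l1 ^ n • ((DM n c m C).mulVec ((A2M c m A1 A2).mulVec v))
        = -((-1:ℂ) ^ (n-1) • (C ⟨n-1, by omega⟩).mulVec X1) := by
      rw [← key2]
      conv_rhs => rw [hX1', Matrix.mulVec_neg, Matrix.mulVec_smul]
      rw [smul_neg, neg_neg, smul_smul, ← pow_succ, hnn]
    have h5 : -((-1:ℂ) ^ (n-1) • (C ⟨n-1, by omega⟩).mulVec X1) = l1 ^ n • (-(w • v)) := by
      rw [← key3, hw']
    have h6 : (-1:ℂ) ^ (n-1) • (C ⟨n-1, by omega⟩).mulVec X1 = (l1 ^ n * w) • v := by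
      have := congrArg Neg.neg h5
      rw [neg_neg, smul_neg, neg_neg, smul_smul] at this
      exact this
    have hsq : ((-1:ℂ)) ^ (n-1) * ((-1:ℂ)) ^ (n-1) = 1 := by
      rw [← pow_add]
      exact Even.neg_one_pow ⟨n-1, rfl⟩
    calc (C ⟨n-1, by omega⟩ * A1).mulVec v
        = (C ⟨n-1, by omega⟩).mulVec X1 := by rw [← Matrix.mulVec_mulVec, ← hX1]
      _ = ((-1:ℂ) ^ (n-1) * (-1:ℂ) ^ (n-1)) • (C ⟨n-1, by omega⟩).mulVec X1 := by
          rw [hsq, one_smul]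
      _ = (-1:ℂ) ^ (n-1) • ((-1:ℂ) ^ (n-1) • (C ⟨n-1, by omega⟩).mulVec X1) := by
          rw [mul_smul]
      _ = (-1:ℂ) ^ (n-1) • ((l1 ^ n * w) • v) := by rw [h6]
      _ = ((-1:ℂ) ^ (n-1) * (l1 ^ n * w)) • v := by rw [smul_smul]
  -- apply P3
  have hne : ((l1, l2) : ℂ × ℂ) ≠ 0 := by
    intro hE
    rw [Prod.mk_eq_zero] at hE
    rw [hE.1, hE.2] at h0; simp at h0
  have hcon : l1 ^ n * (l2 ^ n * w) + l2 ^ n * (-(l1 ^ n * w)) = 0 := by ring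
  have p1 : (l2 • A1 + l1 • A2).mulVec v = 0 := by
    rw [Matrix.add_mulVec, Matrix.smul_mulVec, Matrix.smul_mulVec, ← hX1, ← hX2]
    exact hker
  have p2 : (C ⟨0, hn⟩ * A2 + (l2 ^ n * w) • 1).mulVec v = 0 := by
    rw [Matrix.add_mulVec, Matrix.smul_mulVec, Matrix.one_mulVec, hI1]
    simp
  have p3 : (C ⟨n-1, by omega⟩ * A1 + ((-1:ℂ) ^ (n-1) * -(l1 ^ n * w)) • 1).mulVec v = 0 := by
    rw [Matrix.add_mulVec, Matrix.smul_mulVec, Matrix.one_mulVec, hI2, ← add_smul]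
    have hz0 : (-1:ℂ) ^ (n-1) * (l1 ^ n * w) + (-1:ℂ) ^ (n-1) * -(l1 ^ n * w) = 0 := by ring
    rw [hz0, zero_smul]
  exact hP3 l1 l2 (l2 ^ n * w) (-(l1 ^ n * w)) hne hcon v p1 p2 p3 he

def Cext (n c : ℕ) (C : Fin n → Mat c) (j : ℕ) : Mat c :=
  if h : j < n then C ⟨j, h⟩ else 0

noncomputable def gam (c : ℕ) (m : ℤ) (k i : ℕ) : ℂ :=
  (k.choose i : ℂ) * cS c m ^ (k-i) * sS c m ^ i

noncomputable def Dd (n c : ℕ) (m : ℤ) (C : Fin n → Mat c) (k j : ℕ) : Mat c :=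
  ∑ i ∈ Finset.range (k+1), gam c m k i • Cext n c C (j+i)

lemma gam_succ (c : ℕ) (m : ℤ) (k i : ℕ) (hik : i ≤ k) :
    gam c m (k+1) (i+1) = cS c m * gam c m k (i+1) + sS c m * gam c m k i := by
  unfold gam
  rcases Nat.lt_or_ge i k with h | h
  · have hch : (((k+1).choose (i+1) : ℕ) : ℂ) = (k.choose (i+1) : ℂ) + (k.choose i : ℂ) := by
      rw [Nat.choose_succ_succ]; push_cast; ring
    rw [hch, show k+1-(i+1) = k-i from by omega,
      show k - i = (k-(i+1))+1 from by omega, pow_succ, pow_succ]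
    ring
  · have hik' : i = k := by omega
    subst hik'
    simp only [Nat.choose_self, Nat.choose_succ_self, Nat.cast_one, Nat.cast_zero,
      Nat.sub_self, pow_zero, zero_mul, mul_zero, zero_add, one_mul]
    ring
lemma gam_zero' (c : ℕ) (m : ℤ) (k : ℕ) :
    gam c m (k+1) 0 = cS c m * gam c m k 0 := by
  unfold gam
  rw [Nat.choose_zero_right, Nat.choose_zero_right]
  rw [show k+1-0 = k+1 from rfl, show k-0 = k from rfl, pow_succ]
  ring
lemma gam_top (c : ℕ) (m : ℤ) (k : ℕ) : gam c m k (k+1) = 0 := by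
  unfold gam
  rw [Nat.choose_succ_self]
  push_cast
  ring

lemma Dd_zero (n c : ℕ) (m : ℤ) (C : Fin n → Mat c) (j : ℕ) :
    Dd n c m C 0 j = Cext n c C j := by
  unfold Dd gam
  simp

lemma Dd_top (n c : ℕ) (m : ℤ) (hn : 0 < n) (C : Fin n → Mat c) :
    Dd n c m C (n-1) 0 = DM n c m C := by
  unfold Dd DM
  have h1 : ∀ q : Fin n,
      (((n - 1).choose q.val : ℂ) * cS c m ^ (n - 1 - q.val) * sS c m ^ q.val) • C q
      = (fun j => gam c m (n-1) j • Cext n c C j) q.val := by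
    intro q
    simp only [gam, Cext, dif_pos q.isLt]
  rw [show n-1+1 = n from by omega]
  rw [Finset.sum_congr rfl fun i (_ : i ∈ Finset.range n) =>
    (by rw [zero_add] : gam c m (n-1) i • Cext n c C (0+i) = gam c m (n-1) i • Cext n c C i)]
  rw [← Fin.sum_univ_eq_sum_range (fun j => gam c m (n-1) j • Cext n c C j) ]
  exact Finset.sum_congr rfl fun q _ => (h1 q).symm

lemma Dd_pascal (n c : ℕ) (m : ℤ) (C : Fin n → Mat c) (k j : ℕ) :
    Dd n c m C (k+1) j = cS c m • Dd n c m C k j + sS c m • Dd n c m C k (j+1) := by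
  unfold Dd
  rw [Finset.sum_range_succ']
  have hterm : ∀ i ∈ Finset.range (k+1), gam c m (k+1) (i+1) • Cext n c C (j+(i+1))
      = cS c m • (gam c m k (i+1) • Cext n c C (j+(i+1)))
        + sS c m • (gam c m k i • Cext n c C ((j+1)+i)) := by
    intro i hi
    rw [Finset.mem_range] at hi
    rw [gam_succ c m k i (by omega), show (j+1)+i = j+(i+1) from by omega,
      smul_smul, smul_smul, ← add_smul]
  rw [Finset.sum_congr rfl hterm, Finset.sum_add_distrib, Finset.smul_sum, Finset.smul_sum]
  have hS1 : (∑ i ∈ Finset.range (k+1), cS c m • (gam c m k (i+1) • Cext n c C (j+(i+1))))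
      + gam c m (k+1) 0 • Cext n c C (j+0)
      = ∑ i ∈ Finset.range (k+1), cS c m • (gam c m k i • Cext n c C (j+i)) := by
    rw [Finset.sum_range_succ (fun i => cS c m • (gam c m k (i+1) • Cext n c C (j+(i+1)))) k,
      gam_top, Finset.sum_range_succ' (fun i => cS c m • (gam c m k i • Cext n c C (j+i))) k,
      gam_zero', mul_smul]
    simp
  rw [← hS1]
  abel

lemma C_formula {n c : ℕ} (m : ℤ) (hn : 0 < n) {A1 A2 : Mat c} {C : Fin n → Mat c}
    (h1 : CondP1 n c A1 A2 C) (hg : IsUnit (A2M c m A1 A2).det) (q : Fin n) :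
    C q = ((A2M c m A1 A2)⁻¹ * A1) ^ (q : ℕ) * ((A2M c m A1 A2)⁻¹ * A2) ^ (n - 1 - (q : ℕ))
      * DM n c m C := by
  set g := A2M c m A1 A2 with hgdef
  set Q' := g⁻¹ * A1 with hQ'
  set P' := g⁻¹ * A2 with hP'
  have hcomb : cS c m • P' + sS c m • Q' = 1 := by
    rw [hQ', hP', ← mul_smul_comm, ← mul_smul_comm, ← mul_add]
    have : sS c m • A1 + cS c m • A2 = g := by rw [hgdef]; rfl
    rw [add_comm, this, Matrix.nonsing_inv_mul _ hg]
  have hrel : ∀ i, i + 1 < n → Q' * Cext n c C i = P' * Cext n c C (i+1) := by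
    intro i hi
    have hL := (h1.2 i hi).1
    unfold Cext
    rw [dif_pos (show i < n by omega), dif_pos hi, hQ', hP', mul_assoc, mul_assoc, hL]
  have hQD : ∀ k j, j + k + 2 ≤ n → Q' * Dd n c m C k j = P' * Dd n c m C k (j+1) := by
    intro k j hjk
    unfold Dd
    rw [Finset.mul_sum, Finset.mul_sum]
    refine Finset.sum_congr rfl fun i hi => ?_
    rw [Finset.mem_range] at hi
    rw [mul_smul_comm, mul_smul_comm, hrel (j+i) (by omega), show (j+1)+i = (j+i)+1 from by omega]
  have hone : ∀ X : Mat c, cS c m • (P' * X) + sS c m • (Q' * X) = X := by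
    intro X
    calc cS c m • (P' * X) + sS c m • (Q' * X) = (cS c m • P' + sS c m • Q') * X := by
          rw [add_mul, smul_mul_assoc, smul_mul_assoc]
      _ = X := by rw [hcomb, one_mul]
  have hPstep : ∀ k j, j + k + 2 ≤ n → P' * Dd n c m C (k+1) j = Dd n c m C k j := by
    intro k j hjk
    rw [Dd_pascal, mul_add, mul_smul_comm, mul_smul_comm, ← hQD k j (by omega), hone]
  have hQstep : ∀ k j, j + k + 2 ≤ n → Q' * Dd n c m C (k+1) j = Dd n c m C k (j+1) := by
    intro k j hjk
    rw [Dd_pascal, mul_add, mul_smul_comm, mul_smul_comm, hQD k j (by omega), hone]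
  have main : ∀ d, d ≤ n - 1 → ∀ j, j ≤ d →
      Dd n c m C (n-1-d) j = Q' ^ j * P' ^ (d - j) * DM n c m C := by
    intro d
    induction d with
    | zero =>
        intro _ j hj
        interval_cases j
        simp only [Nat.sub_zero, pow_zero, one_mul]
        exact Dd_top n c m hn C
    | succ d ih =>
        intro hd j hj
        rcases j with _ | j'
        · have hk : n-1-(d+1)+1 = n-1-d := by omega
          have := hPstep (n-1-(d+1)) 0 (by omega)
          rw [hk] at this
          rw [← this, ih (by omega) 0 (by omega)]
          simp only [pow_zero, one_mul, Nat.sub_zero]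
          rw [← mul_assoc, ← pow_succ']
        · have hk : n-1-(d+1)+1 = n-1-d := by omega
          have := hQstep (n-1-(d+1)) j' (by omega)
          rw [hk] at this
          rw [← this, ih (by omega) j' (by omega)]
          rw [show d + 1 - (j'+1) = d - j' from by omega, ← mul_assoc, ← mul_assoc, ← pow_succ']
  have hfin := main (n-1) le_rfl q.val (by have := q.isLt; omega)
  rw [show n-1-(n-1) = 0 from by omega, Dd_zero] at hfin
  rw [show n - 1 - (q:ℕ) = n-1-(q:ℕ) from rfl]
  rw [← hfin]
  unfold Cext
  rw [dif_pos q.isLt]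

lemma recoverA1 (c : ℕ) (m : ℤ) (A1 A2 : Mat c) :
    cS c m • A1M c m A1 A2 + sS c m • A2M c m A1 A2 = A1 := by
  have ht := trig c m
  unfold A1M A2M
  match_scalars
  · linear_combination ht
  · ring

lemma recoverA2 (c : ℕ) (m : ℤ) (A1 A2 : Mat c) :
    cS c m • A2M c m A1 A2 - sS c m • A1M c m A1 A2 = A2 := by
  have ht := trig c m
  unfold A1M A2M
  match_scalars
  · ring
  · linear_combination ht

lemma binom_smul_sum {c : ℕ} (x y : ℂ) (X Y : Mat c) (hc : Commute X Y) (N : ℕ) :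
    ∑ k ∈ Finset.range (N+1), ((N.choose k : ℂ) * x^(N-k) * y^k) • (X^(N-k) * Y^k)
      = (x • X + y • Y)^N := by
  have h2 : Commute (y • Y) (x • X) := (hc.symm.smul_left y).smul_right x
  have hap := h2.add_pow N
  rw [add_comm (y • Y) (x • X)] at hap
  rw [hap]
  refine Finset.sum_congr rfl fun k hk => ?_
  have hR : (y • Y) ^ k * (x • X) ^ (N-k) * (↑(N.choose k) : Mat c)
      = ((N.choose k : ℂ) * x^(N-k) * y^k) • (X^(N-k) * Y^k) := by
    rw [smul_pow, smul_pow, smul_mul_assoc, mul_smul_comm, smul_smul, smul_mul_assoc,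
      ← (Nat.cast_commute (N.choose k) (Y^k * X^(N-k))).eq,
      ← nsmul_eq_mul (N.choose k) (Y^k * X^(N-k)),
      ← Nat.cast_smul_eq_nsmul ℂ (N.choose k) (Y^k * X^(N-k)),
      smul_smul, (hc.symm.pow_pow k (N-k)).eq]
    exact congrArg (fun r : ℂ => r • (X^(N-k) * Y^k)) (by ring)
  exact hR.symm


lemma pow_mulVec_eig {c : ℕ} (M : Mat c) (a : ℂ) (v : Fin c → ℂ) (h : M.mulVec v = a • v) :
    ∀ k : ℕ, (M ^ k).mulVec v = a ^ k • v := by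
  intro k
  induction k with
  | zero => simp [Matrix.one_mulVec]
  | succ k ih =>
      rw [pow_succ, ← Matrix.mulVec_mulVec, h, Matrix.mulVec_smul, ih, smul_smul, pow_succ]
      ring_nf

lemma surj_main {n c : ℕ} (hn : 0 < n) (m : ℤ) (b1 b2 g : Mat c) (e : Fin c → ℂ)
    (hT1 : b1 * b2 = b2 * b1) (hT2 : CondT2 c b1 b2 e) (hug : IsUnit g) :
    ∃ A1 A2 : Mat c, ∃ C : Fin n → Mat c,
      (CondP n c hn A1 A2 C e ∧ IsUnit (A2M c m A1 A2)) ∧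
      BM c m A1 A2 = b1 ∧ EM n c m A1 A2 C = b2 ∧ A2M c m A1 A2 = g := by
  have hgd : IsUnit g.det := (Matrix.isUnit_iff_isUnit_det g).mp hug
  have ht := trig c m
  set co := cS c m with hco
  set si := sS c m with hsi
  set P : Mat c := co • 1 - si • b1 with hP
  set Q : Mat c := si • 1 + co • b1 with hQ
  set D0 : Mat c := b2 * g⁻¹ with hD0
  set Cf : Fin n → Mat c := fun q => P ^ (n-1-(q:ℕ)) * Q ^ (q:ℕ) * D0 with hCf
  have hnn : n - 1 + 1 = n := by omega
  -- commutation facts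
  have hPQ : P * Q = Q * P := by
    rw [hP, hQ]
    simp only [mul_add, add_mul, mul_sub, sub_mul, smul_mul_assoc, mul_smul_comm, smul_smul,
      mul_one, one_mul]
    module
  have hPQc : Commute P Q := hPQ
  have hPb2 : P * b2 = b2 * P := by
    rw [hP]
    simp only [sub_mul, mul_sub, smul_mul_assoc, mul_smul_comm, one_mul, mul_one, hT1]
  have hQb2 : Q * b2 = b2 * Q := by
    rw [hQ]
    simp only [add_mul, mul_add, smul_mul_assoc, mul_smul_comm, one_mul, mul_one, hT1]
  have hQPa : ∀ a : ℕ, Q * P ^ a = P ^ a * Q :=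
    fun a => ((show Commute Q P from hPQ.symm).pow_right a).eq
  have hPQa : ∀ a : ℕ, P * Q ^ a = Q ^ a * P := fun a => (hPQc.pow_right a).eq
  have hPowb2 : ∀ a : ℕ, P ^ a * b2 = b2 * P ^ a :=
    fun a => ((show Commute P b2 from hPb2).pow_left a).eq
  have hQowb2 : ∀ a : ℕ, Q ^ a * b2 = b2 * Q ^ a :=
    fun a => ((show Commute Q b2 from hQb2).pow_left a).eq
  have hD0g : D0 * g = b2 := by
    rw [hD0]; exact Matrix.nonsing_inv_mul_cancel_right _ _ hgd
  -- rotation facts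
  have hA2Mraw : si • (g * Q) + co • (g * P) = g := by
    have h1 : si • Q + co • P = 1 := by
      rw [hP, hQ]
      match_scalars
      · linear_combination ht
      · ring
    calc si • (g * Q) + co • (g * P) = g * (si • Q + co • P) := by
          rw [← mul_smul_comm, ← mul_smul_comm, ← mul_add]
      _ = g := by rw [h1, mul_one]
  have hA1Mraw : co • (g * Q) - si • (g * P) = g * b1 := by
    have h1 : co • Q - si • P = b1 := by
      rw [hP, hQ]
      match_scalars
      · ring
      · linear_combination ht
    calc co • (g * Q) - si • (g * P) = g * (co • Q - si • P) := by
          rw [← mul_smul_comm, ← mul_smul_comm, ← mul_sub]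
      _ = g * b1 := by rw [h1]
  have hA2Mg : A2M c m (g * Q) (g * P) = g := by
    unfold A2M; rw [← hco, ← hsi]; exact hA2Mraw
  have hA1Mg : A1M c m (g * Q) (g * P) = g * b1 := by
    unfold A1M; rw [← hco, ← hsi]; exact hA1Mraw
  have hcombPQ : co • P + si • Q = 1 := by
    rw [hP, hQ]
    match_scalars
    · linear_combination ht
    · ring
  -- DM computation
  have hDM : DM n c m Cf = D0 := by
    unfold DM
    rw [← hco, ← hsi]
    have h1 : ∀ q : Fin n, (((n-1).choose q.val : ℂ) * co ^ (n-1-q.val) * si ^ q.val) • Cf q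
        = ((((n-1).choose q.val : ℂ) * co ^ (n-1-q.val) * si ^ q.val) •
            (P ^ (n-1-q.val) * Q ^ q.val)) * D0 := by
      intro q
      rw [hCf]
      simp only []
      rw [smul_mul_assoc]
    rw [Finset.sum_congr rfl fun q _ => h1 q, ← Finset.sum_mul]
    have hb := binom_smul_sum co si P Q hPQc (n-1)
    rw [hnn, hcombPQ, one_pow] at hb
    rw [Fin.sum_univ_eq_sum_range
      (fun k => (((n-1).choose k : ℂ) * co ^ (n-1-k) * si ^ k) • (P ^ (n-1-k) * Q ^ k)), hb,
      one_mul]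
  refine ⟨g * Q, g * P, Cf, ⟨⟨?_, ?_, ?_⟩, ?_⟩, ?_, ?_, hA2Mg⟩
  · -- CondP1
    constructor
    · intro h1n
      have hC0 : Cf ⟨0, by omega⟩ = P ^ (n-1-0) * Q ^ (0:ℕ) * D0 := rfl
      rw [hC0]
      subst h1n
      rw [show (1:ℕ)-1-0 = 0 from rfl, pow_zero, pow_zero, one_mul, one_mul]
      have key : Q * (D0 * (g * P)) = P * (D0 * (g * Q)) := by
        rw [← mul_assoc D0 g P, hD0g, ← mul_assoc D0 g Q, hD0g, ← mul_assoc, hQb2, mul_assoc,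
          ← hPQ, ← mul_assoc, ← hPb2, mul_assoc]
      calc g * Q * D0 * (g * P) = g * (Q * (D0 * (g * P))) := by simp only [mul_assoc]
        _ = g * (P * (D0 * (g * Q))) := by rw [key]
        _ = g * P * D0 * (g * Q) := by simp only [mul_assoc]
    · intro q hq
      have ha : n-1-q = (n-1-(q+1))+1 := by omega
      have hCq : Cf ⟨q, by omega⟩ = P ^ (n-1-q) * Q ^ q * D0 := rfl
      have hCq1 : Cf ⟨q+1, hq⟩ = P ^ (n-1-(q+1)) * Q ^ (q+1) * D0 := rfl
      rw [hCq, hCq1]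
      constructor
      · have key : Q * (P ^ (n-1-q) * (Q ^ q * D0))
            = P * (P ^ (n-1-(q+1)) * (Q ^ (q+1) * D0)) := by
          rw [ha, pow_succ']
          calc Q * (P * P ^ (n-1-(q+1)) * (Q ^ q * D0))
              = (Q * P) * (P ^ (n-1-(q+1)) * (Q ^ q * D0)) := by simp only [mul_assoc]
            _ = (P * Q) * (P ^ (n-1-(q+1)) * (Q ^ q * D0)) := by rw [← hPQ]
            _ = P * ((Q * P ^ (n-1-(q+1))) * (Q ^ q * D0)) := by simp only [mul_assoc]
            _ = P * ((P ^ (n-1-(q+1)) * Q) * (Q ^ q * D0)) := by rw [hQPa]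
            _ = P * (P ^ (n-1-(q+1)) * (Q * Q ^ q * D0)) := by simp only [mul_assoc]
            _ = P * (P ^ (n-1-(q+1)) * (Q ^ (q+1) * D0)) := by rw [← pow_succ']
        calc g * Q * (P ^ (n-1-q) * Q ^ q * D0)
            = g * (Q * (P ^ (n-1-q) * (Q ^ q * D0))) := by simp only [mul_assoc]
          _ = g * (P * (P ^ (n-1-(q+1)) * (Q ^ (q+1) * D0))) := by rw [key]
          _ = g * P * (P ^ (n-1-(q+1)) * Q ^ (q+1) * D0) := by simp only [mul_assoc]
      · have key : P ^ (n-1-q) * (Q ^ q * (D0 * (g * Q)))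
            = P ^ (n-1-(q+1)) * (Q ^ (q+1) * (D0 * (g * P))) := by
          rw [← mul_assoc D0 g Q, hD0g, ← mul_assoc D0 g P, hD0g, ha, pow_succ']
          calc P * P ^ (n-1-(q+1)) * (Q ^ q * (b2 * Q))
              = P * P ^ (n-1-(q+1)) * ((Q ^ q * b2) * Q) := by simp only [mul_assoc]
            _ = P * P ^ (n-1-(q+1)) * ((b2 * Q ^ q) * Q) := by rw [hQowb2]
            _ = (P * P ^ (n-1-(q+1))) * (b2 * Q ^ (q+1)) := by
                simp only [mul_assoc, ← pow_succ]
            _ = (P ^ (n-1-(q+1)) * P) * (b2 * Q ^ (q+1)) := by rw [← pow_succ, ← pow_succ']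
            _ = P ^ (n-1-(q+1)) * ((P * b2) * Q ^ (q+1)) := by simp only [mul_assoc]
            _ = P ^ (n-1-(q+1)) * ((b2 * P) * Q ^ (q+1)) := by rw [hPb2]
            _ = P ^ (n-1-(q+1)) * (b2 * (P * Q ^ (q+1))) := by simp only [mul_assoc]
            _ = P ^ (n-1-(q+1)) * (b2 * (Q ^ (q+1) * P)) := by rw [hPQa]
            _ = P ^ (n-1-(q+1)) * ((b2 * Q ^ (q+1)) * P) := by simp only [mul_assoc]
            _ = P ^ (n-1-(q+1)) * ((Q ^ (q+1) * b2) * P) := by rw [hQowb2]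
            _ = P ^ (n-1-(q+1)) * (Q ^ (q+1) * (b2 * P)) := by simp only [mul_assoc]
        calc P ^ (n-1-q) * Q ^ q * D0 * (g * Q)
            = P ^ (n-1-q) * (Q ^ q * (D0 * (g * Q))) := by simp only [mul_assoc]
          _ = P ^ (n-1-(q+1)) * (Q ^ (q+1) * (D0 * (g * P))) := by rw [key]
          _ = P ^ (n-1-(q+1)) * Q ^ (q+1) * D0 * (g * P) := by simp only [mul_assoc]
  · -- CondP2
    refine ⟨(si, co), ?_, ?_⟩
    · intro hE
      rw [Prod.mk_eq_zero] at hE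
      rw [hE.1, hE.2] at ht
      norm_num at ht
    · show ((si, co).1 • (g * Q) + (si, co).2 • (g * P)).det ≠ 0
      simp only
      rw [hA2Mraw]
      exact hgd.ne_zero
  · -- CondP3
    intro l1 l2 μ1 μ2 hl hμ v hv1 hv2 hv3 hve
    set α := l1 * co + l2 * si with hα
    set β := l2 * co - l1 * si with hβ
    have hinner : l2 • Q + l1 • P = α • (1 : Mat c) + β • b1 := by
      rw [hQ, hP, hα, hβ]; module
    have hfac : l2 • (g * Q) + l1 • (g * P) = g * (α • (1 : Mat c) + β • b1) := by
      calc l2 • (g * Q) + l1 • (g * P) = g * (l2 • Q + l1 • P) := by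
            rw [← mul_smul_comm, ← mul_smul_comm, ← mul_add]
        _ = g * (α • (1 : Mat c) + β • b1) := by rw [hinner]
    rw [hfac] at hv1
    have hib1 : (α • (1 : Mat c) + β • b1).mulVec v = 0 := by
      calc (α • (1 : Mat c) + β • b1).mulVec v
          = (g⁻¹ * (g * (α • (1 : Mat c) + β • b1))).mulVec v := by
            rw [Matrix.nonsing_inv_mul_cancel_left _ _ hgd]
        _ = g⁻¹.mulVec ((g * (α • (1 : Mat c) + β • b1)).mulVec v) :=
            (Matrix.mulVec_mulVec _ _ _).symm
        _ = 0 := by rw [hv1, Matrix.mulVec_zero]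
    have hlαβ : l1 = co * α - si * β := by rw [hα, hβ]; linear_combination (-l1) * ht
    have hl2αβ : l2 = si * α + co * β := by rw [hα, hβ]; linear_combination (-l2) * ht
    by_cases hb : β = 0
    · have hαne : α ≠ 0 := by
        intro h0'
        exact hl (Prod.mk_eq_zero.mpr ⟨by rw [hlαβ, h0', hb]; ring, by rw [hl2αβ, h0', hb]; ring⟩)
      rw [hb, zero_smul, add_zero, Matrix.smul_mulVec, Matrix.one_mulVec] at hib1
      exact (smul_eq_zero.mp hib1).resolve_left hαne
    · have hbv : b1.mulVec v = (β⁻¹ * (-α)) • v := by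
        have h10 : β • b1.mulVec v = (-α) • v := by
          rw [Matrix.add_mulVec, Matrix.smul_mulVec, Matrix.smul_mulVec,
            Matrix.one_mulVec] at hib1
          rw [neg_smul, eq_neg_iff_add_eq_zero, add_comm]
          exact hib1
        calc b1.mulVec v = β⁻¹ • (β • b1.mulVec v) := by rw [inv_smul_smul₀ hb]
          _ = β⁻¹ • ((-α) • v) := by rw [h10]
          _ = (β⁻¹ * (-α)) • v := by rw [smul_smul]
      have hPv : P.mulVec v = (β⁻¹ * l2) • v := by
        rw [hP, Matrix.sub_mulVec, Matrix.smul_mulVec, Matrix.smul_mulVec,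
          Matrix.one_mulVec, hbv, smul_smul, ← sub_smul]
        refine congrArg (· • v) ?_
        have hkey2 : l2 = co * β + si * α := by rw [hα, hβ]; linear_combination (-l2) * ht
        rw [hkey2]
        field_simp
        try ring
      have hQv : Q.mulVec v = (β⁻¹ * (-l1)) • v := by
        rw [hQ, Matrix.add_mulVec, Matrix.smul_mulVec, Matrix.smul_mulVec,
          Matrix.one_mulVec, hbv, smul_smul, ← add_smul]
        refine congrArg (· • v) ?_
        rw [hlαβ]
        field_simp
        try ring
      have hC0A2 : Cf ⟨0, hn⟩ * (g * P) = b2 * P ^ n := by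
        have h0' : Cf ⟨0, hn⟩ = P ^ (n-1-0) * Q ^ (0:ℕ) * D0 := rfl
        rw [h0', Nat.sub_zero, pow_zero, mul_one]
        calc P ^ (n-1) * D0 * (g * P) = P ^ (n-1) * (b2 * P) := by
              simp only [mul_assoc]
              rw [← mul_assoc D0 g P, hD0g]
          _ = (P ^ (n-1) * b2) * P := by rw [mul_assoc]
          _ = (b2 * P ^ (n-1)) * P := by rw [hPowb2]
          _ = b2 * P ^ n := by rw [mul_assoc, ← pow_succ, hnn]
      have hCnA1 : Cf ⟨n-1, by omega⟩ * (g * Q) = b2 * Q ^ n := by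
        have h0' : Cf ⟨n-1, by omega⟩ = P ^ (n-1-(n-1)) * Q ^ (n-1) * D0 := rfl
        rw [h0', Nat.sub_self, pow_zero, one_mul]
        calc Q ^ (n-1) * D0 * (g * Q) = Q ^ (n-1) * (b2 * Q) := by
              simp only [mul_assoc]
              rw [← mul_assoc D0 g Q, hD0g]
          _ = (Q ^ (n-1) * b2) * Q := by rw [mul_assoc]
          _ = (b2 * Q ^ (n-1)) * Q := by rw [hQowb2]
          _ = b2 * Q ^ n := by rw [mul_assoc, ← pow_succ, hnn]
      have hPnv := pow_mulVec_eig P (β⁻¹ * l2) v hPv n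
      have hQnv := pow_mulVec_eig Q (β⁻¹ * (-l1)) v hQv n
      have hc1 : ((β⁻¹ * l2) ^ n) • b2.mulVec v = -(μ1 • v) := by
        rw [hC0A2, Matrix.add_mulVec, Matrix.smul_mulVec, Matrix.one_mulVec,
          ← Matrix.mulVec_mulVec, hPnv, Matrix.mulVec_smul] at hv2
        exact eq_neg_of_add_eq_zero_left hv2
      have hc2 : ((β⁻¹ * (-l1)) ^ n) • b2.mulVec v = -(((-1:ℂ) ^ (n-1) * μ2) • v) := by
        rw [hCnA1, Matrix.add_mulVec, Matrix.smul_mulVec, Matrix.one_mulVec,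
          ← Matrix.mulVec_mulVec, hQnv, Matrix.mulVec_smul] at hv3
        exact eq_neg_of_add_eq_zero_left hv3
      have hb1z : (b1 + (-(β⁻¹ * (-α))) • 1).mulVec v = 0 := by
        rw [Matrix.add_mulVec, Matrix.smul_mulVec, Matrix.one_mulVec, hbv, neg_smul]
        simp
      rcases eq_or_ne l2 0 with hl2 | hl2
      · have hl1 : l1 ≠ 0 := fun h => hl (Prod.mk_eq_zero.mpr ⟨h, hl2⟩)
        have hsne : (β⁻¹ * (-l1)) ^ n ≠ 0 :=
          pow_ne_zero _ (mul_ne_zero (inv_ne_zero hb) (neg_ne_zero.mpr hl1))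
        have hb2v : b2.mulVec v = (-(((β⁻¹ * (-l1)) ^ n)⁻¹ * ((-1:ℂ) ^ (n-1) * μ2))) • v := by
          calc b2.mulVec v = ((β⁻¹ * (-l1)) ^ n)⁻¹ • (((β⁻¹ * (-l1)) ^ n) • b2.mulVec v) := by
                rw [inv_smul_smul₀ hsne]
            _ = ((β⁻¹ * (-l1)) ^ n)⁻¹ • -(((-1:ℂ) ^ (n-1) * μ2) • v) := by rw [hc2]
            _ = (-(((β⁻¹ * (-l1)) ^ n)⁻¹ * ((-1:ℂ) ^ (n-1) * μ2))) • v := by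
                rw [smul_neg, smul_smul, ← neg_smul]
        have hb2z : (b2 + ((((β⁻¹ * (-l1)) ^ n)⁻¹ * ((-1:ℂ) ^ (n-1) * μ2))) • 1).mulVec v = 0 := by
          rw [Matrix.add_mulVec, Matrix.smul_mulVec, Matrix.one_mulVec, hb2v, neg_smul]
          simp
        exact hT2 _ _ v hb1z hb2z hve
      · have hsne : (β⁻¹ * l2) ^ n ≠ 0 :=
          pow_ne_zero _ (mul_ne_zero (inv_ne_zero hb) hl2)
        have hb2v : b2.mulVec v = (-(((β⁻¹ * l2) ^ n)⁻¹ * μ1)) • v := by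
          calc b2.mulVec v = ((β⁻¹ * l2) ^ n)⁻¹ • (((β⁻¹ * l2) ^ n) • b2.mulVec v) := by
                rw [inv_smul_smul₀ hsne]
            _ = ((β⁻¹ * l2) ^ n)⁻¹ • -(μ1 • v) := by rw [hc1]
            _ = (-(((β⁻¹ * l2) ^ n)⁻¹ * μ1)) • v := by rw [smul_neg, smul_smul, ← neg_smul]
        have hb2z : (b2 + ((((β⁻¹ * l2) ^ n)⁻¹ * μ1)) • 1).mulVec v = 0 := by
          rw [Matrix.add_mulVec, Matrix.smul_mulVec, Matrix.one_mulVec, hb2v, neg_smul]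
          simp
        exact hT2 _ _ v hb1z hb2z hve
  · -- IsUnit A2M
    rw [hA2Mg]; exact hug
  · -- BM = b1
    unfold BM
    rw [hA2Mg, hA1Mg]
    exact Matrix.nonsing_inv_mul_cancel_left _ _ hgd
  · -- EM = b2
    unfold EM
    rw [hA2Mg, hDM, hD0g]


/-- the map ζ_m is well defined on P^n(c)_m (its values satisfy (T1), (T2)
and the GL factor is invertible) and is a bijection onto T(c) × GL(c, ℂ). -/
theorem stmt0 (n c : ℕ) (hn : 0 < n) (hc : 0 < c) (m : ℕ) (hm : m ≤ c) :
    Set.BijOn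
      (fun t : Mat c × Mat c × (Fin n → Mat c) × (Fin c → ℂ) =>
        ((BM c m t.1 t.2.1, EM n c m t.1 t.2.1 t.2.2.1, t.2.2.2), A2M c m t.1 t.2.1))
      {t : Mat c × Mat c × (Fin n → Mat c) × (Fin c → ℂ) |
        CondP n c hn t.1 t.2.1 t.2.2.1 t.2.2.2 ∧ IsUnit (A2M c m t.1 t.2.1)}
      {x : (Mat c × Mat c × (Fin c → ℂ)) × Mat c |
        ADHM c x.1.1 x.1.2.1 x.1.2.2 ∧ IsUnit x.2} := by
  refine ⟨?_, ?_, ?_⟩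
  · -- MapsTo
    rintro ⟨A1, A2, C, e⟩ ht
    have hu : IsUnit (A2M c ↑m A1 A2) := ht.2
    have h1 : CondP1 n c A1 A2 C := ht.1.1
    have h3 : CondP3 n c A1 A2 (C ⟨0, hn⟩) (C ⟨n - 1, by omega⟩) e := ht.1.2.2
    have hg : IsUnit (A2M c ↑m A1 A2).det := (Matrix.isUnit_iff_isUnit_det _).mp hu
    exact ⟨⟨fwd_T1 ↑m h1 hg, fwd_T2 ↑m hn h1 h3 hg⟩, hu⟩
  · -- InjOn
    rintro ⟨A1, A2, C, e⟩ ht ⟨A1', A2', C', e'⟩ ht' heq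
    have hu : IsUnit (A2M c ↑m A1 A2) := ht.2
    have hu' : IsUnit (A2M c ↑m A1' A2') := ht'.2
    have h1 : CondP1 n c A1 A2 C := ht.1.1
    have h1' : CondP1 n c A1' A2' C' := ht'.1.1
    simp only [Prod.mk.injEq] at heq
    obtain ⟨⟨hB, hE, he⟩, hA2⟩ := heq
    have hg : IsUnit (A2M c ↑m A1 A2).det := (Matrix.isUnit_iff_isUnit_det _).mp hu
    have hg' : IsUnit (A2M c ↑m A1' A2').det := (Matrix.isUnit_iff_isUnit_det _).mp hu'
    have hA1M : A1M c ↑m A1 A2 = A1M c ↑m A1' A2' := by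
      have e1 : A2M c ↑m A1 A2 * BM c ↑m A1 A2 = A1M c ↑m A1 A2 := by
        unfold BM; exact Matrix.mul_nonsing_inv_cancel_left _ _ hg
      have e2 : A2M c ↑m A1' A2' * BM c ↑m A1' A2' = A1M c ↑m A1' A2' := by
        unfold BM; exact Matrix.mul_nonsing_inv_cancel_left _ _ hg'
      rw [← e1, ← e2, hB, hA2]
    have hA1e : A1 = A1' := by
      rw [← recoverA1 c ↑m A1 A2, ← recoverA1 c ↑m A1' A2', hA1M, hA2]
    have hA2e : A2 = A2' := by
      rw [← recoverA2 c ↑m A1 A2, ← recoverA2 c ↑m A1' A2', hA1M, hA2]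
    have hDMe : DM n c ↑m C = DM n c ↑m C' := by
      have e1 : EM n c ↑m A1 A2 C * (A2M c ↑m A1 A2)⁻¹ = DM n c ↑m C := by
        unfold EM; exact Matrix.mul_nonsing_inv_cancel_right _ _ hg
      have e2 : EM n c ↑m A1' A2' C' * (A2M c ↑m A1' A2')⁻¹ = DM n c ↑m C' := by
        unfold EM; exact Matrix.mul_nonsing_inv_cancel_right _ _ hg'
      rw [← e1, ← e2, hE, hA2]
    have hCe : C = C' := funext fun q => by
      rw [C_formula ↑m hn h1 hg q, C_formula ↑m hn h1' hg' q, hA1e, hA2e, hDMe]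
    subst hA1e
    subst hA2e
    subst hCe
    subst he
    rfl
  · -- SurjOn
    rintro ⟨⟨b1, b2, e⟩, g⟩ hx
    have hT1 : b1 * b2 = b2 * b1 := hx.1.1
    have hT2 : CondT2 c b1 b2 e := hx.1.2
    have hug : IsUnit g := hx.2
    obtain ⟨A1, A2, C, hmem, hBM, hEM, hA2M⟩ := surj_main hn ↑m b1 b2 g e hT1 hT2 hug
    refine ⟨(A1, A2, C, e), hmem, ?_⟩
    show ((BM c ↑m A1 A2, EM n c ↑m A1 A2 C, e), A2M c ↑m A1 A2) = ((b1, b2, e), g)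
    rw [hBM, hEM, hA2M]
end

section
/- Fix integers n ≥ 1, c ≥ 1 and m ∈ {0, …, c}. If the tuple (A₁, A₂; C₁, …, C_n; e) satisfies condition (P1) and A_{2m} is invertible, then the matrices B_m and E_m commute: B_m E_m = E_m B_m. -/
open Matrix

lemma stmt3_key (n c : ℕ) (A1 A2 : Mat c) (C : Fin n → Mat c) (hP1 : CondP1 n c A1 A2 C) :
    ∀ q : Fin n, A1 * C q * A2 = A2 * C q * A1 := by
  obtain ⟨h1, h2⟩ := hP1
  intro q
  by_cases h : q.val + 1 < n
  · obtain ⟨ha, hb⟩ := h2 q.val h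
    have hq : (⟨q.val, by omega⟩ : Fin n) = q := rfl
    rw [hq] at ha hb
    rw [ha, mul_assoc, ← hb, ← mul_assoc]
  · have hqn : q.val + 1 = n := by omega
    by_cases h0 : q.val = 0
    · have hn1 : n = 1 := by omega
      have : q = ⟨0, by omega⟩ := by ext; simp [h0]
      rw [this]; exact h1 hn1
    · obtain ⟨ha, hb⟩ := h2 (q.val - 1) (by omega)
      have hq : (⟨q.val - 1 + 1, by omega⟩ : Fin n) = q := by ext; simp; omega
      rw [hq] at ha hb
      rw [mul_assoc, ← hb, ← mul_assoc, ha]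

/-- under (P1) and invertibility of A_{2m}, B_m and E_m commute. -/
theorem stmt3 (n c : ℕ) (hn : 0 < n) (hc : 0 < c) (m : ℕ) (hm : m ≤ c)
    (A1 A2 : Mat c) (C : Fin n → Mat c)
    (hP1 : CondP1 n c A1 A2 C) (hinv : IsUnit (A2M c m A1 A2)) :
    BM c m A1 A2 * EM n c m A1 A2 C = EM n c m A1 A2 C * BM c m A1 A2 := by
  have key := stmt3_key n c A1 A2 C hP1
  set D := DM n c m C with hD
  have keyD : A1 * D * A2 = A2 * D * A1 := by
    rw [hD]; unfold DM
    simp only [Finset.mul_sum, Finset.sum_mul, Matrix.mul_smul, Matrix.smul_mul]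
    refine Finset.sum_congr rfl fun q _ => ?_
    rw [key q]
  have keyM : A1M c m A1 A2 * D * A2M c m A1 A2 = A2M c m A1 A2 * D * A1M c m A1 A2 := by
    unfold A1M A2M
    simp only [sub_mul, mul_sub, add_mul, mul_add, Matrix.smul_mul, Matrix.mul_smul,
      smul_smul]
    rw [show A1 * D * A2 = A2 * D * A1 from keyD] -- might need adjust
    module
  set X := A2M c m A1 A2 with hX
  set Y := A1M c m A1 A2 with hY
  have hdet := (Matrix.isUnit_iff_isUnit_det X).mp hinv
  have h1 : X⁻¹ * X = 1 := Matrix.nonsing_inv_mul _ hdet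
  have h2 : X * X⁻¹ = 1 := Matrix.mul_nonsing_inv _ hdet
  show X⁻¹ * Y * (D * X) = D * X * (X⁻¹ * Y)
  rw [mul_assoc D X, ← mul_assoc X, h2, one_mul]
  rw [mul_assoc, ← mul_assoc Y D X, keyM, ← mul_assoc, ← mul_assoc, h1, one_mul]
end

section
/- Fix integers n > 1 and c ≥ 1, and let A₁, A₂ ∈ M_c(ℂ) satisfy condition (P2). Then the ℂ-linear map M_c(ℂ)^n → M_c(ℂ)^{n−1} sending (C₁, …, C_n) to (A₁C₁ − A₂C₂, A₁C₂ − A₂C₃, …, A₁C_{n−1} − A₂C_n) is surjective (i.e. has rank (n−1)c²), and its kernel has dimension c² as a ℂ-vector space. -/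
open Matrix Polynomial

/-- The ℂ-linear map M_c(ℂ)^n → M_c(ℂ)^{n−1},
(C₁, …, C_n) ↦ (A₁C₁ − A₂C₂, …, A₁C_{n−1} − A₂C_n). -/
noncomputable def Lmap (n c : ℕ) (A1 A2 : Mat c) :
    (Fin n → Mat c) →ₗ[ℂ] (Fin (n - 1) → Mat c) where
  toFun C := fun q =>
    A1 * C ⟨q.val, by have := q.isLt; omega⟩ -
      A2 * C ⟨q.val + 1, by have := q.isLt; omega⟩
  map_add' C C' := by
    funext q
    simp only [Pi.add_apply, mul_add]
    abel
  map_smul' a C := by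
    funext q
    simp only [Pi.smul_apply, Matrix.mul_smul, smul_sub, RingHom.id_apply]

lemma avoid_roots (k : ℕ) (p : Polynomial ℂ) (hp : p ≠ 0) :
    ∃ v : Fin k → ℂ, Function.Injective v ∧ ∀ i, p.eval (v i) ≠ 0 := by
  have hfin : {x : ℂ | p.IsRoot x}.Finite := Polynomial.finite_setOf_isRoot hp
  have hinf : ({x : ℂ | p.IsRoot x}ᶜ).Infinite := hfin.infinite_compl
  obtain f := hinf.natEmbedding
  refine ⟨fun i => (f i.val).1, ?_, ?_⟩
  · intro a b hab
    have := f.injective (Subtype.ext hab)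
    exact Fin.val_injective this
  · intro i
    exact (f i.val).2

lemma exists_pts (k : ℕ) (c : ℕ) (A1 A2 : Mat c)
    (hP2 : ∃ ν : ℂ × ℂ, ν ≠ 0 ∧ (ν.1 • A1 + ν.2 • A2).det ≠ 0) :
    ∃ v : Fin k → ℂ, Function.Injective v ∧ ∀ i, (A1 - v i • A2).det ≠ 0 := by
  set P : Polynomial ℂ := ((A1.map C) - (X : ℂ[X]) • (A2.map C)).det with hPdef
  have heval : ∀ x : ℂ, P.eval x = (A1 - x • A2).det := by
    intro x
    have := RingHom.map_det (Polynomial.evalRingHom x) ((A1.map C) - (X : ℂ[X]) • (A2.map C))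
    rw [hPdef]
    rw [show Polynomial.eval x P = (Polynomial.evalRingHom x) P from rfl] at *
    rw [this]
    congr 1
    ext i j
    simp [Matrix.map_apply, Matrix.sub_apply, Matrix.smul_apply, fun a b : ℂ => mul_comm a b]
  -- P ≠ 0
  have hP : P ≠ 0 := by
    obtain ⟨⟨a, b⟩, hne, hdet⟩ := hP2
    by_cases ha : a = 0
    · -- b ≠ 0, A2 invertible
      have hb : b ≠ 0 := by
        intro hb; exact hne (by simp [Prod.ext_iff, ha, hb])
      have hA2 : A2.det ≠ 0 := by
        rw [ha] at hdet
        simp only [zero_smul, zero_add, Matrix.det_smul] at hdet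
        intro h; exact hdet (by simp [h])
      -- use charpoly of A2⁻¹ * A1
      have hcp : (Matrix.charpoly (A2⁻¹ * A1)) ≠ 0 := (Matrix.charpoly_monic _).ne_zero
      obtain ⟨v, _, hv⟩ := avoid_roots 1 _ hcp
      set x := v 0
      have hx : ((Matrix.charpoly (A2⁻¹ * A1)).eval x) ≠ 0 := hv 0
      have hchar : (Matrix.charpoly (A2⁻¹ * A1)).eval x = (x • 1 - A2⁻¹ * A1).det := by
        rw [Matrix.charpoly, _root_.eval_det, Matrix.matPolyEquiv_charmatrix]
        simp only [Polynomial.eval_sub, Polynomial.eval_X, Polynomial.eval_C]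
        congr 1
        ext i j
        simp [Matrix.scalar, Matrix.smul_apply, Matrix.one_apply, Matrix.diagonal_apply]
      intro h0
      have := heval x
      rw [h0] at this
      simp only [Polynomial.eval_zero] at this
      -- det(A1 - x•A2) = (-1)^c det A2 det(x•1 - A2⁻¹A1)
      have key : A1 - x • A2 = (-1 : ℂ) • (A2 * (x • 1 - A2⁻¹ * A1)) := by
        have h2 : A2 * (A2⁻¹ * A1) = A1 := by
          rw [← Matrix.mul_assoc, Matrix.mul_nonsing_inv A2 (isUnit_iff_ne_zero.mpr hA2), Matrix.one_mul]
        rw [Matrix.mul_sub, h2, Matrix.mul_smul, Matrix.mul_one]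
        simp
      rw [key, Matrix.det_smul, Matrix.det_mul] at this
      rw [hchar] at hx
      have : ((-1:ℂ)^(Fintype.card (Fin c)) * (A2.det * (x • 1 - A2⁻¹ * A1).det)) = 0 := this.symm
      rcases mul_eq_zero.mp this with h | h
      · exact (pow_ne_zero _ (neg_ne_zero.mpr one_ne_zero)) h
      · rcases mul_eq_zero.mp h with h | h
        · exact hA2 h
        · exact hx h
    · -- a ≠ 0, eval at -b/a
      intro h0
      apply hdet
      have := heval (-(b/a))
      rw [h0, Polynomial.eval_zero] at this
      have hab : a * (-(b/a)) = -b := by field_simp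
      have key : a • (A1 - (-(b/a)) • A2) = a • A1 + b • A2 := by
        rw [smul_sub, smul_smul, hab, neg_smul, sub_neg_eq_add]
      have hz : (A1 - (-(b/a)) • A2).det = 0 := this.symm
      calc ((a, b).1 • A1 + (a, b).2 • A2).det = (a • (A1 - (-(b/a)) • A2)).det := by rw [key]
        _ = a ^ (Fintype.card (Fin c)) * 0 := by rw [Matrix.det_smul, hz]
        _ = 0 := mul_zero _
  obtain ⟨v, hvi, hv⟩ := avoid_roots k P hP
  exact ⟨v, hvi, fun i => by rw [← heval]; exact hv i⟩

/-- if (A₁, A₂) satisfies (P2) then the map (C₁,…,C_n) ↦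
(A₁C₁ − A₂C₂, …, A₁C_{n−1} − A₂C_n) is surjective and its kernel has dimension c². -/
theorem stmt6 (n c : ℕ) (hn : 1 < n) (hc : 0 < c) (A1 A2 : Mat c)
    (hP2 : CondP2 c A1 A2) :
    Function.Surjective (Lmap n c A1 A2) ∧
    Module.finrank ℂ (LinearMap.ker (Lmap n c A1 A2)) = c ^ 2 := by
  obtain ⟨v, hvinj, hv⟩ := exists_pts (n-1) c A1 A2 hP2
  have hsurj : Function.Surjective (Lmap n c A1 A2) := by
    intro B
    set V := Matrix.vandermonde v with hVdef
    have hVdet : V.det ≠ 0 := by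
      rw [hVdef, Matrix.det_vandermonde]
      apply Finset.prod_ne_zero_iff.mpr
      intro i _
      apply Finset.prod_ne_zero_iff.mpr
      intro j hj
      simp only [Finset.mem_Ioi] at hj
      exact sub_ne_zero.mpr fun h => (ne_of_gt hj) (hvinj h)
    have hVunit : IsUnit V.det := isUnit_iff_ne_zero.mpr hVdet
    set E : Fin (n-1) → Mat c := fun i => ∑ j, (V⁻¹ j i) • B j with hE
    refine ⟨fun r => ∑ i, (v i)^(r.val) • ((A1 - v i • A2)⁻¹ * E i), ?_⟩
    funext q
    show A1 * (∑ i, (v i)^(q.val) • ((A1 - v i • A2)⁻¹ * E i))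
        - A2 * (∑ i, (v i)^(q.val+1) • ((A1 - v i • A2)⁻¹ * E i)) = B q
    rw [Finset.mul_sum, Finset.mul_sum, ← Finset.sum_sub_distrib]
    have step : ∀ i : Fin (n-1), A1 * ((v i)^(q.val) • ((A1 - v i • A2)⁻¹ * E i))
        - A2 * ((v i)^(q.val+1) • ((A1 - v i • A2)⁻¹ * E i)) = (v i)^(q.val) • E i := by
      intro i
      have hinv : (A1 - v i • A2) * (A1 - v i • A2)⁻¹ = 1 :=
        Matrix.mul_nonsing_inv _ (isUnit_iff_ne_zero.mpr (hv i))
      have h1 : (A1 - v i • A2) * ((A1 - v i • A2)⁻¹ * E i) = E i := by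
        rw [← Matrix.mul_assoc, hinv, Matrix.one_mul]
      conv_rhs => rw [← h1]
      rw [Matrix.mul_smul, Matrix.mul_smul, Matrix.sub_mul, Matrix.smul_mul, smul_sub,
        smul_smul, ← pow_succ]
    rw [Finset.sum_congr rfl (fun i _ => step i)]
    calc ∑ i, (v i)^(q.val) • E i
        = ∑ i, ∑ j, ((V⁻¹ j i) * (V i q)) • B j := by
          apply Finset.sum_congr rfl; intro i _
          rw [hE, Finset.smul_sum]
          apply Finset.sum_congr rfl; intro j _
          rw [smul_smul, mul_comm]
          congr 1
      _ = ∑ j, (∑ i, (V⁻¹ j i) * (V i q)) • B j := by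
          rw [Finset.sum_comm]
          apply Finset.sum_congr rfl; intro j _
          rw [Finset.sum_smul]
      _ = ∑ j, ((V⁻¹ * V) j q) • B j := by
          apply Finset.sum_congr rfl; intro j _
          rw [Matrix.mul_apply]
      _ = B q := by
          rw [Matrix.nonsing_inv_mul V hVunit]
          simp [Matrix.one_apply]
  refine ⟨hsurj, ?_⟩
  have hrn := LinearMap.finrank_range_add_finrank_ker (Lmap n c A1 A2)
  rw [LinearMap.range_eq_top.mpr hsurj, finrank_top] at hrn
  have hM : Module.finrank ℂ (Mat c) = c^2 := by
    show Module.finrank ℂ (Matrix (Fin c) (Fin c) ℂ) = c^2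
    rw [Module.finrank_matrix]
    simp [sq]
  have hdom : Module.finrank ℂ (Fin n → Mat c) = n * c^2 := by
    rw [Module.finrank_pi_fintype, Finset.sum_congr rfl (fun i _ => hM)]
    simp [Finset.sum_const]
  have hcod : Module.finrank ℂ (Fin (n-1) → Mat c) = (n-1) * c^2 := by
    rw [Module.finrank_pi_fintype, Finset.sum_congr rfl (fun i _ => hM)]
    simp [Finset.sum_const]
  rw [hdom, hcod] at hrn
  obtain ⟨m, rfl⟩ : ∃ m, n = m + 1 := ⟨n-1, by omega⟩
  simp only [Nat.add_sub_cancel, add_one_mul] at hrn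
  omega
end

section
/- Fix integers n ≥ 1, c ≥ 1 and m ∈ {0, …, c}. Let A₁, A₂, C₁, …, C_n ∈ M_c(ℂ) be such that A_{2m} is invertible and A₁C_q = A₂C_{q+1} for q = 1, …, n−1. Then C₁ = (c_m·1 − s_m B_m)^{n−1} D_m and C_n = (s_m·1 + c_m B_m)^{n−1} D_m. -/
open Matrix

noncomputable def auxS (c : ℕ) (co s : ℂ) (C : ℕ → Mat c) (k j : ℕ) : Mat c :=
  ∑ q ∈ Finset.range (k+1), ((k.choose q : ℂ) * co ^ (k-q) * s ^ q) • C (j+q)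

lemma auxS_step (c : ℕ) (co s : ℂ) (C : ℕ → Mat c) (k j : ℕ) :
    auxS c co s C (k+1) j = co • auxS c co s C k j + s • auxS c co s C k (j+1) := by
  unfold auxS
  rw [Finset.smul_sum, Finset.smul_sum]
  rw [Finset.sum_range_succ' (fun q => (((k+1).choose q : ℂ) * co ^ (k+1-q) * s ^ q) • C (j+q)) (k+1)]
  rw [Finset.sum_range_succ (fun q => (((k+1).choose (q+1) : ℂ) * co ^ (k+1-(q+1)) * s ^ (q+1)) • C (j+(q+1))) k]
  rw [Finset.sum_range_succ' (fun q => co • (((k.choose q : ℂ) * co ^ (k-q) * s ^ q) • C (j+q))) k]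
  rw [Finset.sum_range_succ (fun q => s • (((k.choose q : ℂ) * co ^ (k-q) * s ^ q) • C (j+1+q))) k]
  have hmid : ∀ q ∈ Finset.range k,
      (((k+1).choose (q+1) : ℂ) * co ^ (k+1-(q+1)) * s ^ (q+1)) • C (j+(q+1))
        = co • (((k.choose (q+1) : ℂ) * co ^ (k-(q+1)) * s ^ (q+1)) • C (j+(q+1)))
          + s • (((k.choose q : ℂ) * co ^ (k-q) * s ^ q) • C (j+1+q)) := by
    intro q hq
    rw [Finset.mem_range] at hq
    have h1 : k + 1 - (q+1) = (k - (q+1)) + 1 := by omega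
    have h2 : k - q = (k - (q+1)) + 1 := by omega
    have h3 : j + 1 + q = j + (q+1) := by omega
    rw [Nat.choose_succ_succ, h1, h2, h3, smul_smul, smul_smul, ← add_smul]
    congr 1
    push_cast
    ring
  rw [Finset.sum_congr rfl hmid, Finset.sum_add_distrib]
  have hlast : (((k+1).choose (k+1) : ℂ) * co ^ (k+1-(k+1)) * s ^ (k+1)) • C (j+(k+1))
      = s • (((k.choose k : ℂ) * co ^ (k-k) * s ^ k) • C (j+1+k)) := by
    have h3 : j + 1 + k = j + (k+1) := by omega
    rw [h3, smul_smul]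
    congr 1
    simp [pow_succ]
    ring
  have hfirst : (((k+1).choose 0 : ℂ) * co ^ (k+1-0) * s ^ 0) • C (j+0)
      = co • (((k.choose 0 : ℂ) * co ^ (k-0) * s ^ 0) • C (j+0)) := by
    rw [smul_smul]
    congr 1
    simp [pow_succ]
    ring
  rw [hlast, hfirst]
  abel

lemma aux_main {c : ℕ} (co s : ℂ) (P Q : Mat c)
    (hPQ : P * Q = Q * P) (hone : co • Q + s • P = 1) (N : ℕ) (C : ℕ → Mat c)
    (hrec : ∀ q, q + 1 ≤ N → P * C q = Q * C (q+1)) :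
    ∀ k j, j + k ≤ N →
      Q ^ k * auxS c co s C k j = C j ∧ P ^ k * auxS c co s C k j = C (j+k) := by
  have hPS : ∀ k j, j + k + 1 ≤ N →
      P * auxS c co s C k j = Q * auxS c co s C k (j+1) := by
    intro k j h
    unfold auxS
    rw [Finset.mul_sum, Finset.mul_sum]
    refine Finset.sum_congr rfl fun q hq => ?_
    rw [Finset.mem_range] at hq
    rw [mul_smul_comm, mul_smul_comm, hrec (j+q) (by omega), show j+1+q = j+q+1 from by omega]
  intro k
  induction k with
  | zero =>
    intro j _
    simp [auxS]
  | succ k ih =>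
    intro j hj
    obtain ⟨ihQ, ihP⟩ := ih j (by omega)
    obtain ⟨ihQ', ihP'⟩ := ih (j+1) (by omega)
    have hcomQ : P * Q ^ k = Q ^ k * P := (Commute.pow_right hPQ k)
    have hcomP : Q * P ^ k = P ^ k * Q := (Commute.pow_right hPQ.symm k)
    constructor
    · rw [auxS_step, mul_add, mul_smul_comm, mul_smul_comm]
      have e1 : Q ^ (k+1) * auxS c co s C k j = Q * C j := by
        rw [pow_succ', mul_assoc, ihQ]
      have e2 : Q ^ (k+1) * auxS c co s C k (j+1) = P * C j := by
        rw [pow_succ, mul_assoc, ← hPS k j (by omega), ← mul_assoc, ← hcomQ, mul_assoc, ihQ]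
      rw [e1, e2, ← smul_mul_assoc, ← smul_mul_assoc, ← add_mul, hone, one_mul]
    · rw [auxS_step, mul_add, mul_smul_comm, mul_smul_comm]
      have e1 : P ^ (k+1) * auxS c co s C k j = Q * C (j+1+k) := by
        rw [pow_succ, mul_assoc, hPS k j (by omega), ← mul_assoc, ← hcomP, mul_assoc, ihP']
      have e2 : P ^ (k+1) * auxS c co s C k (j+1) = P * C (j+1+k) := by
        rw [pow_succ', mul_assoc, ihP']
      rw [e1, e2, ← smul_mul_assoc, ← smul_mul_assoc, ← add_mul, hone, one_mul,
        show j+(k+1) = j+1+k from by omega]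

/-- if A_{2m} is invertible and A₁C_q = A₂C_{q+1} for q = 1,…,n−1, then
C₁ = (c_m·1 − s_m B_m)^{n−1} D_m and C_n = (s_m·1 + c_m B_m)^{n−1} D_m. -/
theorem stmt7 (n c : ℕ) (hn : 0 < n) (hc : 0 < c) (m : ℕ) (hm : m ≤ c)
    (A1 A2 : Mat c) (C : Fin n → Mat c)
    (hinv : IsUnit (A2M c m A1 A2))
    (hrec : ∀ q : ℕ, ∀ hq : q + 1 < n,
      A1 * C ⟨q, by omega⟩ = A2 * C ⟨q + 1, hq⟩) :
    C ⟨0, hn⟩ = (cS c m • (1 : Mat c) - sS c m • BM c m A1 A2) ^ (n - 1) * DM n c m C ∧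
    C ⟨n - 1, by omega⟩ =
      (sS c m • (1 : Mat c) + cS c m • BM c m A1 A2) ^ (n - 1) * DM n c m C := by

  set co := cS c (m : ℤ) with hco
  set s := sS c (m : ℤ) with hs
  set B := BM c (m : ℤ) A1 A2 with hB
  set Q : Mat c := co • (1 : Mat c) - s • B with hQ
  set P : Mat c := s • (1 : Mat c) + co • B with hP
  have hcs : co ^ 2 + s ^ 2 = 1 := by
    rw [hco, hs]
    unfold cS sS
    norm_cast
    exact Real.cos_sq_add_sin_sq _
  have hdet : IsUnit (A2M c (m : ℤ) A1 A2).det := (Matrix.isUnit_iff_isUnit_det _).mp hinv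
  have hAB : A2M c (m : ℤ) A1 A2 * B = A1M c (m : ℤ) A1 A2 := by
    rw [hB, BM, ← Matrix.mul_assoc, Matrix.mul_nonsing_inv _ hdet, Matrix.one_mul]
  have hA1 : A1 = A2M c (m : ℤ) A1 A2 * P := by
    rw [hP, mul_add, mul_smul_comm, mul_smul_comm, mul_one, hAB]
    unfold A1M A2M
    conv_lhs => rw [← one_smul ℂ A1, ← hcs]
    rw [← hco, ← hs]
    module
  have hA2 : A2 = A2M c (m : ℤ) A1 A2 * Q := by
    rw [hQ, mul_sub, mul_smul_comm, mul_smul_comm, mul_one, hAB]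
    unfold A1M A2M
    conv_lhs => rw [← one_smul ℂ A2, ← hcs]
    rw [← hco, ← hs]
    module
  have hPQ : P * Q = Q * P := by
    rw [hP, hQ]
    simp only [add_mul, mul_add, sub_mul, mul_sub, smul_mul_assoc, mul_smul_comm, one_mul, mul_one]
    module
  have hone : co • Q + s • P = 1 := by
    have h : co • Q + s • P = (co ^ 2 + s ^ 2) • (1 : Mat c) := by rw [hP, hQ]; module
    rw [h, hcs, one_smul]
  set C' : ℕ → Mat c := fun i => if h : i < n then C ⟨i, h⟩ else 0 with hC'
  have hC'eq : ∀ (i : ℕ) (h : i < n), C' i = C ⟨i, h⟩ := by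
    intro i h; simp [hC', h]
  have hrec' : ∀ q, q + 1 ≤ n - 1 → P * C' q = Q * C' (q+1) := by
    intro q hq
    have hq' : q + 1 < n := by omega
    apply hinv.mul_left_cancel
    rw [← mul_assoc, ← mul_assoc, ← hA1, ← hA2, hC'eq q (by omega), hC'eq (q+1) hq']
    exact hrec q hq'
  have hmain := aux_main co s P Q hPQ hone (n - 1) C' hrec' (n - 1) 0 (by omega)
  have hDM : DM n c (m : ℤ) C = auxS c co s C' (n - 1) 0 := by
    rw [DM, auxS, show n - 1 + 1 = n from by omega,
      ← Fin.sum_univ_eq_sum_range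
        (fun q => (((n-1).choose q : ℂ) * co ^ (n-1-q) * s ^ q) • C' (0+q)) n]
    refine Finset.sum_congr rfl fun q _ => ?_
    rw [show (0 : ℕ) + (q : ℕ) = (q : ℕ) from by omega, hC'eq q.val q.isLt]
  obtain ⟨hQmain, hPmain⟩ := hmain
  constructor
  · rw [hDM, ← hC'eq 0 hn, ← hQmain]
  · rw [show (0 : ℕ) + (n - 1) = n - 1 from by omega] at hPmain
    rw [hDM, ← hC'eq (n-1) (by omega), ← hPmain]
end

section
/- Fix an integer c ≥ 1 and let A₁, A₂ ∈ M_c(ℂ). For any integers m, l, if both A_{2m} and A_{2l} are invertible, then the matrix c_{m−l}·1 − s_{m−l} B_m is invertible and B_l = (c_{m−l}·1 − s_{m−l} B_m)^{-1}(s_{m−l}·1 + c_{m−l} B_m). -/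
open Matrix

lemma cS_key (c : ℕ) (m l : ℤ) :
    cS c (m - l) * cS c m + sS c (m - l) * sS c m = cS c l := by
  simp only [cS, sS]
  norm_cast
  have h : Real.pi * ((m - l : ℤ) : ℝ) / ((c : ℝ) + 1) =
      Real.pi * (m : ℝ) / ((c : ℝ) + 1) - Real.pi * (l : ℝ) / ((c : ℝ) + 1) := by
    push_cast; ring
  push_cast
  push_cast at h
  rw [h, Real.cos_sub, Real.sin_sub]
  linear_combination Real.cos (Real.pi * (l : ℝ) / ((c : ℝ) + 1)) *
    Real.sin_sq_add_cos_sq (Real.pi * (m : ℝ) / ((c : ℝ) + 1))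

lemma sS_key (c : ℕ) (m l : ℤ) :
    cS c (m - l) * sS c m - sS c (m - l) * cS c m = sS c l := by
  simp only [cS, sS]
  norm_cast
  have h : Real.pi * ((m - l : ℤ) : ℝ) / ((c : ℝ) + 1) =
      Real.pi * (m : ℝ) / ((c : ℝ) + 1) - Real.pi * (l : ℝ) / ((c : ℝ) + 1) := by
    push_cast; ring
  push_cast
  push_cast at h
  rw [h, Real.cos_sub, Real.sin_sub]
  linear_combination Real.sin (Real.pi * (l : ℝ) / ((c : ℝ) + 1)) *
    Real.sin_sq_add_cos_sq (Real.pi * (m : ℝ) / ((c : ℝ) + 1))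

lemma A1M_rot (c : ℕ) (m l : ℤ) (A1 A2 : Mat c) :
    A1M c l A1 A2 = cS c (m - l) • A1M c m A1 A2 + sS c (m - l) • A2M c m A1 A2 := by
  simp only [A1M, A2M]
  rw [← cS_key c m l, ← sS_key c m l]
  module

lemma A2M_rot (c : ℕ) (m l : ℤ) (A1 A2 : Mat c) :
    A2M c l A1 A2 = cS c (m - l) • A2M c m A1 A2 - sS c (m - l) • A1M c m A1 A2 := by
  simp only [A1M, A2M]
  rw [← cS_key c m l, ← sS_key c m l]
  module

/-- if A_{2m} and A_{2l} are invertible, then c_{m−l}·1 − s_{m−l}B_m is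
invertible and B_l = (c_{m−l}·1 − s_{m−l}B_m)⁻¹(s_{m−l}·1 + c_{m−l}B_m). -/
theorem stmt10 (c : ℕ) (hc : 0 < c) (A1 A2 : Mat c) (m l : ℤ)
    (hm : IsUnit (A2M c m A1 A2)) (hl : IsUnit (A2M c l A1 A2)) :
    IsUnit (cS c (m - l) • (1 : Mat c) - sS c (m - l) • BM c m A1 A2) ∧
    BM c l A1 A2 =
      (cS c (m - l) • (1 : Mat c) - sS c (m - l) • BM c m A1 A2)⁻¹ *
        (sS c (m - l) • (1 : Mat c) + cS c (m - l) • BM c m A1 A2) := by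
  set cd := cS c (m - l)
  set sd := sS c (m - l)
  have hm1 : A2M c m A1 A2 * (A2M c m A1 A2)⁻¹ = 1 := Matrix.mul_nonsing_inv _ (isUnit_iff_isUnit_det _ |>.mp hm)
  have hm2 : (A2M c m A1 A2)⁻¹ * A2M c m A1 A2 = 1 := Matrix.nonsing_inv_mul _ (isUnit_iff_isUnit_det _ |>.mp hm)
  have hfac : A2M c l A1 A2 = A2M c m A1 A2 * (cd • (1 : Mat c) - sd • BM c m A1 A2) := by
    rw [A2M_rot c m l A1 A2]
    simp only [BM, Matrix.mul_sub, Matrix.mul_smul, Matrix.mul_one, ← Matrix.mul_assoc, hm1,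
      Matrix.one_mul]
    rfl
  have hX : IsUnit (cd • (1 : Mat c) - sd • BM c m A1 A2) := by
    have : cd • (1 : Mat c) - sd • BM c m A1 A2 = (A2M c m A1 A2)⁻¹ * A2M c l A1 A2 := by
      rw [hfac, ← Matrix.mul_assoc, hm2, Matrix.one_mul]
    rw [this]
    exact (Matrix.isUnit_nonsing_inv_iff.mpr hm).mul hl
  refine ⟨hX, ?_⟩
  have hBl : BM c l A1 A2 =
      (cd • (1 : Mat c) - sd • BM c m A1 A2)⁻¹ * ((A2M c m A1 A2)⁻¹ * A1M c l A1 A2) := by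
    rw [BM, hfac, Matrix.mul_inv_rev, Matrix.mul_assoc]
  rw [hBl, A1M_rot c m l A1 A2]
  congr 1
  simp only [BM, Matrix.mul_add, Matrix.mul_smul, hm2, Matrix.smul_mul]
  abel
end

section
/- Fix integers n ≥ 1, c ≥ 1 and integers m, l ∈ {0, …, c}. Let (A₁, A₂; C₁, …, C_n; e) be a tuple satisfying condition (P1) such that both A_{2m} and A_{2l} are invertible. Then E_l = (c_{m−l}·1 − s_{m−l} B_m)^n E_m. -/
open Matrix

lemma trig_sin (c : ℕ) (a b : ℤ) :
    cS c (a - b) * sS c a - sS c (a - b) * cS c a = sS c b := by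
  unfold cS sS
  rw [← Complex.ofReal_mul, ← Complex.ofReal_mul, ← Complex.ofReal_sub, Complex.ofReal_inj]
  have h : Real.pi * (a : ℝ) / ((c:ℝ)+1) - Real.pi * ((a - b : ℤ) : ℝ) / ((c:ℝ)+1)
      = Real.pi * (b:ℝ) / ((c:ℝ)+1) := by
    have hc : ((c:ℝ)+1) ≠ 0 := by positivity
    push_cast
    field_simp
    ring
  have h2 := Real.sin_sub (Real.pi * (a:ℝ) / ((c:ℝ)+1)) (Real.pi * ((a - b : ℤ) : ℝ) / ((c:ℝ)+1))
  rw [h] at h2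
  rw [h2]; ring

lemma trig_cos (c : ℕ) (a b : ℤ) :
    cS c (a - b) * cS c a + sS c (a - b) * sS c a = cS c b := by
  unfold cS sS
  rw [← Complex.ofReal_mul, ← Complex.ofReal_mul, ← Complex.ofReal_add, Complex.ofReal_inj]
  have h : Real.pi * (a : ℝ) / ((c:ℝ)+1) - Real.pi * ((a - b : ℤ) : ℝ) / ((c:ℝ)+1)
      = Real.pi * (b:ℝ) / ((c:ℝ)+1) := by
    have hc : ((c:ℝ)+1) ≠ 0 := by positivity
    push_cast
    field_simp
    ring
  have h2 := Real.cos_sub (Real.pi * (a:ℝ) / ((c:ℝ)+1)) (Real.pi * ((a - b : ℤ) : ℝ) / ((c:ℝ)+1))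
  rw [h] at h2
  rw [h2]; ring

lemma A2M_mul_X (c : ℕ) (m l : ℤ) (A1 A2 : Mat c) (hum : IsUnit (A2M c m A1 A2)) :
    A2M c m A1 A2 * (cS c (m - l) • (1 : Mat c) - sS c (m - l) • BM c m A1 A2)
      = A2M c l A1 A2 := by
  have hdet : IsUnit (A2M c m A1 A2).det := (Matrix.isUnit_iff_isUnit_det _).mp hum
  have hinv : A2M c m A1 A2 * (A2M c m A1 A2)⁻¹ = 1 := Matrix.mul_nonsing_inv _ hdet
  have hB : A2M c m A1 A2 * BM c m A1 A2 = A1M c m A1 A2 := by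
    rw [BM, ← mul_assoc, hinv, one_mul]
  rw [mul_sub, mul_smul_comm, mul_smul_comm, mul_one, hB]
  have e1 := trig_sin c m l
  have e2 := trig_cos c m l
  simp only [A2M, A1M, smul_sub, smul_add, smul_smul]
  match_scalars
  · linear_combination e1
  · linear_combination e2

lemma sum_pascal (c : ℕ) (k : ℕ) (x y : ℂ) (g : ℕ → Mat c) :
    ∑ q ∈ Finset.range (k+2), (((k+1).choose q : ℂ) * x^(k+1-q) * y^q) • g q
    = x • ∑ q ∈ Finset.range (k+1), ((k.choose q : ℂ) * x^(k-q) * y^q) • g q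
      + y • ∑ q ∈ Finset.range (k+1), ((k.choose q : ℂ) * x^(k-q) * y^q) • g (q+1) := by
  rw [Finset.sum_range_succ']
  have hsplit : ∀ q ∈ Finset.range (k+1),
      (((k+1).choose (q+1) : ℂ) * x^(k+1-(q+1)) * y^(q+1)) • g (q+1)
      = ((k.choose q : ℂ) * x^(k-q) * y^(q+1)) • g (q+1)
        + ((k.choose (q+1) : ℂ) * x^(k-q) * y^(q+1)) • g (q+1) := by
    intro q _
    rw [← add_smul]
    congr 1
    rw [Nat.choose_succ_succ]
    push_cast
    ring
  have h1 : ∑ q ∈ Finset.range (k+1), ((k.choose q : ℂ) * x^(k-q) * y^(q+1)) • g (q+1)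
      = y • ∑ q ∈ Finset.range (k+1), ((k.choose q : ℂ) * x^(k-q) * y^q) • g (q+1) := by
    rw [Finset.smul_sum]
    refine Finset.sum_congr rfl fun q _ => ?_
    rw [smul_smul]; congr 1; ring
  have h2 : x • ∑ q ∈ Finset.range (k+1), ((k.choose q : ℂ) * x^(k-q) * y^q) • g q
      = ∑ q ∈ Finset.range (k+1), ((k.choose (q+1) : ℂ) * x^(k-q) * y^(q+1)) • g (q+1)
        + (((k+1).choose 0 : ℂ) * x^(k+1-0) * y^0) • g 0 := by
    rw [Finset.smul_sum, Finset.sum_range_succ']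
    conv_rhs => rw [Finset.sum_range_succ]
    rw [Nat.choose_succ_self]
    simp only [Nat.cast_zero, zero_mul, zero_smul, add_zero]
    congr 1
    · refine Finset.sum_congr rfl fun q hq => ?_
      rw [smul_smul]
      congr 1
      have hqk : q < k := Finset.mem_range.mp hq
      have he : k - q = (k - (q+1)) + 1 := by omega
      rw [he]
      push_cast
      ring
    · rw [smul_smul]
      congr 1
      simp
      ring
  rw [Finset.sum_congr rfl hsplit, Finset.sum_add_distrib, h1, h2]
  abel

lemma DM_eq_range (n c : ℕ) (t : ℤ) (C : Fin n → Mat c) (g : ℕ → Mat c)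
    (hg : ∀ q : Fin n, g q.val = C q) :
    DM n c t C = ∑ q ∈ Finset.range n,
      (((n-1).choose q : ℂ) * cS c t ^ (n-1-q) * sS c t ^ q) • g q := by
  rw [DM, ← Fin.sum_univ_eq_sum_range]
  exact Finset.sum_congr rfl fun q _ => by rw [hg]

lemma DM_succ (k c : ℕ) (t : ℤ) (C : Fin (k+2) → Mat c) :
    DM (k+2) c t C = cS c t • DM (k+1) c t (fun q => C q.castSucc)
      + sS c t • DM (k+1) c t (fun q => C q.succ) := by
  set g : ℕ → Mat c := fun q => if h : q < k+2 then C ⟨q, h⟩ else 0 with hgdef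
  have hg : ∀ q : Fin (k+2), g q.val = C q := fun q => by
    simp [hgdef, q.isLt]
  have h0 : DM (k+2) c t C = ∑ q ∈ Finset.range (k+2),
      (((k+1).choose q : ℂ) * cS c t ^ (k+1-q) * sS c t ^ q) • g q := by
    simpa using DM_eq_range (k+2) c t C g hg
  have h1 : DM (k+1) c t (fun q => C q.castSucc) = ∑ q ∈ Finset.range (k+1),
      ((k.choose q : ℂ) * cS c t ^ (k-q) * sS c t ^ q) • g q := by
    have := DM_eq_range (k+1) c t (fun q => C q.castSucc) g
      (fun q => by simp [hgdef, Nat.lt_succ_of_lt q.isLt]; rfl)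
    simpa using this
  have h2 : DM (k+1) c t (fun q => C q.succ) = ∑ q ∈ Finset.range (k+1),
      ((k.choose q : ℂ) * cS c t ^ (k-q) * sS c t ^ q) • g (q+1) := by
    have := DM_eq_range (k+1) c t (fun q => C q.succ) (fun q => g (q+1))
      (fun q => by simp [hgdef, Nat.succ_lt_succ q.isLt]; rfl)
    simpa using this
  rw [h0, h1, h2, sum_pascal]


lemma A1_DM (k c : ℕ) (t : ℤ) (A1 A2 : Mat c) (C : Fin (k+2) → Mat c)
    (hrel : ∀ q : ℕ, ∀ hq : q + 1 < k + 2, A1 * C ⟨q, by omega⟩ = A2 * C ⟨q+1, hq⟩) :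
    A1 * DM (k+1) c t (fun q => C q.castSucc) = A2 * DM (k+1) c t (fun q => C q.succ) := by
  rw [DM, DM, Finset.mul_sum, Finset.mul_sum]
  refine Finset.sum_congr rfl fun q _ => ?_
  rw [mul_smul_comm, mul_smul_comm]
  congr 1
  exact hrel q.val (Nat.succ_lt_succ q.isLt)

lemma condP1_castSucc (k c : ℕ) (A1 A2 : Mat c) (C : Fin (k+2) → Mat c)
    (hP1 : CondP1 (k+2) c A1 A2 C) :
    CondP1 (k+1) c A1 A2 (fun q => C q.castSucc) := by
  have h01 : A1 * C ⟨0, by omega⟩ = A2 * C ⟨1, by omega⟩ := (hP1.2 0 (by omega)).1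
  have h02 : C ⟨0, by omega⟩ * A1 = C ⟨1, by omega⟩ * A2 := (hP1.2 0 (by omega)).2
  constructor
  · intro h
    show A1 * C ⟨0, by omega⟩ * A2 = A2 * C ⟨0, by omega⟩ * A1
    calc A1 * C ⟨0, by omega⟩ * A2 = A2 * C ⟨1, by omega⟩ * A2 := by rw [h01]
      _ = A2 * (C ⟨1, by omega⟩ * A2) := mul_assoc _ _ _
      _ = A2 * (C ⟨0, by omega⟩ * A1) := by rw [h02]
      _ = A2 * C ⟨0, by omega⟩ * A1 := (mul_assoc _ _ _).symm
  · intro q hq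
    have h := hP1.2 q (by omega)
    constructor
    · show A1 * C ⟨q, by omega⟩ = A2 * C ⟨q+1, by omega⟩
      exact h.1
    · show C ⟨q, by omega⟩ * A1 = C ⟨q+1, by omega⟩ * A2
      exact h.2

lemma condP1_succ (k c : ℕ) (A1 A2 : Mat c) (C : Fin (k+2) → Mat c)
    (hP1 : CondP1 (k+2) c A1 A2 C) :
    CondP1 (k+1) c A1 A2 (fun q => C q.succ) := by
  have h01 : A1 * C ⟨0, by omega⟩ = A2 * C ⟨1, by omega⟩ := (hP1.2 0 (by omega)).1
  have h02 : C ⟨0, by omega⟩ * A1 = C ⟨1, by omega⟩ * A2 := (hP1.2 0 (by omega)).2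
  constructor
  · intro h
    show A1 * C ⟨1, by omega⟩ * A2 = A2 * C ⟨1, by omega⟩ * A1
    calc A1 * C ⟨1, by omega⟩ * A2 = A1 * (C ⟨1, by omega⟩ * A2) := mul_assoc _ _ _
      _ = A1 * (C ⟨0, by omega⟩ * A1) := by rw [h02]
      _ = A1 * C ⟨0, by omega⟩ * A1 := (mul_assoc _ _ _).symm
      _ = A2 * C ⟨1, by omega⟩ * A1 := by rw [h01]
  · intro q hq
    have h := hP1.2 (q+1) (by omega)
    constructor
    · show A1 * C ⟨q+1, by omega⟩ = A2 * C ⟨q+2, by omega⟩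
      exact h.1
    · show C ⟨q+1, by omega⟩ * A1 = C ⟨q+2, by omega⟩ * A2
      exact h.2

lemma main_ind (c : ℕ) (m l : ℤ) (A1 A2 : Mat c) (hum : IsUnit (A2M c m A1 A2)) :
    ∀ k : ℕ, ∀ C : Fin (k+1) → Mat c, CondP1 (k+1) c A1 A2 C →
      EM (k+1) c l A1 A2 C =
        (cS c (m - l) • (1 : Mat c) - sS c (m - l) • BM c m A1 A2) ^ (k+1)
          * EM (k+1) c m A1 A2 C := by
  intro k
  induction k with
  | zero =>
    intro C hP1
    have hD : ∀ t : ℤ, DM 1 c t C = C 0 := by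
      intro t; simp [DM]
    rw [EM, EM, hD, hD, pow_one]
    refine hum.mul_left_cancel ?_
    conv_rhs => rw [← mul_assoc]
    rw [A2M_mul_X c m l A1 A2 hum]
    have hc : A1 * C 0 * A2 = A2 * C 0 * A1 := hP1.1 rfl
    have hc' : A1 * (C 0 * A2) = A2 * (C 0 * A1) := by
      rw [← mul_assoc, ← mul_assoc, hc]
    simp only [A2M, add_mul, mul_add, smul_mul_assoc, mul_smul_comm, smul_smul, mul_assoc]
    simp only [hc']
    module
  | succ k ih =>
    intro C hP1
    have hP1' := condP1_castSucc k c A1 A2 C hP1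
    have hP1'' := condP1_succ k c A1 A2 C hP1
    have ih' := ih (fun q => C q.castSucc) hP1'
    have ih'' := ih (fun q => C q.succ) hP1''
    have hkey := A1_DM k c m A1 A2 C (fun q hq => (hP1.2 q hq).1)
    have hX := A2M_mul_X c m l A1 A2 hum
    have hmain : (cS c (m-l) • (1 : Mat c) - sS c (m-l) • BM c m A1 A2)
          * (DM (k+2) c m C * A2M c m A1 A2)
        = (cS c l • DM (k+1) c m (fun q => C q.castSucc)
            + sS c l • DM (k+1) c m (fun q => C q.succ)) * A2M c m A1 A2 := by
      refine hum.mul_left_cancel ?_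
      conv_lhs => rw [← mul_assoc, hX]
      rw [← mul_assoc, ← mul_assoc]
      congr 1
      rw [DM_succ]
      simp only [A2M, mul_add, add_mul, mul_smul_comm, smul_mul_assoc, smul_add, smul_smul,
        mul_assoc]
      simp only [hkey]
      module
    calc EM (k+2) c l A1 A2 C
        = (cS c l • DM (k+1) c l (fun q => C q.castSucc)
            + sS c l • DM (k+1) c l (fun q => C q.succ)) * A2M c l A1 A2 := by
          rw [EM, DM_succ]
      _ = cS c l • EM (k+1) c l A1 A2 (fun q => C q.castSucc)
          + sS c l • EM (k+1) c l A1 A2 (fun q => C q.succ) := by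
          simp only [EM, add_mul, smul_mul_assoc]
      _ = cS c l • ((cS c (m-l) • (1 : Mat c) - sS c (m-l) • BM c m A1 A2) ^ (k+1)
              * EM (k+1) c m A1 A2 (fun q => C q.castSucc))
          + sS c l • ((cS c (m-l) • (1 : Mat c) - sS c (m-l) • BM c m A1 A2) ^ (k+1)
              * EM (k+1) c m A1 A2 (fun q => C q.succ)) := by
          rw [ih', ih'']
      _ = (cS c (m-l) • (1 : Mat c) - sS c (m-l) • BM c m A1 A2) ^ (k+1)
            * ((cS c l • DM (k+1) c m (fun q => C q.castSucc)
                + sS c l • DM (k+1) c m (fun q => C q.succ)) * A2M c m A1 A2) := by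
          simp only [EM, mul_add, mul_smul_comm, add_mul, smul_mul_assoc]
      _ = (cS c (m-l) • (1 : Mat c) - sS c (m-l) • BM c m A1 A2) ^ (k+1)
            * ((cS c (m-l) • (1 : Mat c) - sS c (m-l) • BM c m A1 A2)
              * (DM (k+2) c m C * A2M c m A1 A2)) := by
          rw [hmain]
      _ = (cS c (m-l) • (1 : Mat c) - sS c (m-l) • BM c m A1 A2) ^ (k+2)
            * EM (k+2) c m A1 A2 C := by
          rw [EM]
          conv_rhs => rw [pow_succ, mul_assoc]

/-- under (P1), if A_{2m} and A_{2l} are invertible then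
E_l = (c_{m−l}·1 − s_{m−l}B_m)^n E_m. -/
theorem stmt11 (n c : ℕ) (hn : 0 < n) (hc : 0 < c) (m l : ℕ) (hm : m ≤ c) (hl : l ≤ c)
    (A1 A2 : Mat c) (C : Fin n → Mat c) (e : Fin c → ℂ)
    (hP1 : CondP1 n c A1 A2 C)
    (hum : IsUnit (A2M c m A1 A2)) (hul : IsUnit (A2M c l A1 A2)) :
    EM n c l A1 A2 C =
      (cS c ((m : ℤ) - (l : ℤ)) • (1 : Mat c) -
        sS c ((m : ℤ) - (l : ℤ)) • BM c m A1 A2) ^ n * EM n c m A1 A2 C := by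
  obtain ⟨k, rfl⟩ : ∃ k, n = k + 1 := ⟨n - 1, by omega⟩
  exact main_ind c (m : ℤ) (l : ℤ) A1 A2 hum k C hP1
end
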